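/- arXiv:2202.03000 — 5 statements merged into one kernel-verified Lean document; each statement's English description precedes it below -/
import Mathlib

section
/- Let G be a finitely generated torsion-free nilpotent group and let φ : G → G be a surjective group homomorphism. Then φ is injective; in particular, φ is an automorphism of G. -/
open Subgroup
open scoped commutatorElement

section Aux

universe u

variable {G : Type u} [Group G]

private lemma myClosure_normal_of_conj {s : Set G}
    (h : ∀ x ∈ s, ∀ g : G, g * x * g⁻¹ ∈ Subgroup.closure s) :
    (Subgroup.closure s).Normal := by
  constructor
  intro n hn g
  have hle : Subgroup.closure s ≤
      (Subgroup.closure s).comap (MulAut.conj g : G ≃* G).toMonoidHom := by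
    rw [Subgroup.closure_le]
    intro x hx
    simp only [Set.mem_preimage, SetLike.mem_coe, Subgroup.mem_comap,
      MulEquiv.coe_toMonoidHom, MulAut.conj_apply]
    exact h x hx g
  have := hle hn
  simpa using this

private lemma myLcs_map_eq {G' : Type u} [Group G'] (f : G →* G')
    (hf : Function.Surjective f) : ∀ n, ((⊤ : Subgroup G).lowerCentralSeries n).map f = (⊤ : Subgroup G').lowerCentralSeries n
  | 0 => by simpa using Subgroup.map_top_of_surjective f hf
  | n + 1 => by
    show ((⁅(⊤ : Subgroup G).lowerCentralSeries n, ⊤⁆ : Subgroup G)).map f = ⁅(⊤ : Subgroup G').lowerCentralSeries n, ⊤⁆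
    rw [Subgroup.map_commutator, myLcs_map_eq f hf n, Subgroup.map_top_of_surjective f hf]

private def myKset (S : Set G) : ℕ → Set G
  | 0 => S
  | n + 1 => (fun p : G × G => ⁅p.1, p.2⁆) '' ((myKset S n) ×ˢ S)

private lemma myKset_finite {S : Set G} (hS : S.Finite) : ∀ n, (myKset S n).Finite
  | 0 => hS
  | n + 1 => Set.Finite.image _ ((myKset_finite hS n).prod hS)

private lemma myKset_sub (S : Set G) : ∀ n, myKset S n ⊆ ((⊤ : Subgroup G).lowerCentralSeries n : Set G)
  | 0 => by intro x _; trivial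
  | n + 1 => by
    rintro x ⟨⟨k, s⟩, ⟨hk, _⟩, rfl⟩
    exact Subgroup.commutator_mem_commutator (myKset_sub S n hk) (Subgroup.mem_top s)

private lemma myLcs_eq_closure_sup {S : Set G} (hS : Subgroup.closure S = ⊤) :
    ∀ n, (⊤ : Subgroup G).lowerCentralSeries n =
      Subgroup.closure (myKset S n) ⊔ (⊤ : Subgroup G).lowerCentralSeries (n + 1)
  | 0 => by
    have : Subgroup.closure (myKset S 0) = ⊤ := hS
    rw [Subgroup.lowerCentralSeries_zero, this, top_sup_eq]
  | n + 1 => by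
    set R : Subgroup G :=
      Subgroup.closure (myKset S (n + 1) ∪ ((⊤ : Subgroup G).lowerCentralSeries (n + 2) : Set G)) with hRdef
    have hRsup : R = Subgroup.closure (myKset S (n + 1)) ⊔ (⊤ : Subgroup G).lowerCentralSeries (n + 2) := by
      rw [hRdef, Subgroup.closure_union, Subgroup.closure_eq]
    have hRle : R ≤ (⊤ : Subgroup G).lowerCentralSeries (n + 1) := by
      rw [hRsup]
      exact sup_le (Subgroup.closure_le _ |>.2 (myKset_sub S (n + 1)))
        (Subgroup.lowerCentralSeries_antitone ⊤ (Nat.le_succ _))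
    haveI hRnormal : R.Normal := by
      apply myClosure_normal_of_conj
      rintro x (hx | hx) g
      · have hx1 : x ∈ (⊤ : Subgroup G).lowerCentralSeries (n + 1) := myKset_sub S (n + 1) hx
        have hcomm : ⁅x⁻¹, g⁆ ∈ (⊤ : Subgroup G).lowerCentralSeries (n + 2) :=
          Subgroup.commutator_mem_commutator (inv_mem hx1) (Subgroup.mem_top g)
        have : g * x * g⁻¹ = x * ⁅x⁻¹, g⁆ := by
          rw [commutatorElement_def]; group
        rw [this]
        exact mul_mem (Subgroup.subset_closure (Or.inl hx))
          (Subgroup.subset_closure (Or.inr hcomm))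
      · exact Subgroup.subset_closure
          (Or.inr ((Subgroup.lowerCentralSeries_normal ⊤ (n + 2)).conj_mem x hx g))
    -- now show γ_{n+1} ≤ R
    have hπker : ∀ y : G, (QuotientGroup.mk' R) y = 1 ↔ y ∈ R := by
      intro y; rw [← MonoidHom.mem_ker, QuotientGroup.ker_mk']
    set π := QuotientGroup.mk' R with hπ
    have hcentral : ∀ a ∈ (⊤ : Subgroup G).lowerCentralSeries n, π a ∈ Subgroup.center (G ⧸ R) := by
      have hsub : (⊤ : Subgroup G).lowerCentralSeries n ≤
          (Subgroup.center (G ⧸ R)).comap π := by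
        rw [myLcs_eq_closure_sup hS n]
        apply sup_le
        · rw [Subgroup.closure_le]
          intro k hk
          simp only [SetLike.mem_coe, Subgroup.mem_comap]
          rw [Subgroup.mem_center_iff]
          intro q
          obtain ⟨g, rfl⟩ := QuotientGroup.mk'_surjective R q
          have hgen : Subgroup.closure S ≤ (Subgroup.centralizer {π k}).comap π := by
            rw [Subgroup.closure_le]
            intro s hs
            simp only [SetLike.mem_coe, Subgroup.mem_comap]
            rw [Subgroup.mem_centralizer_iff]
            rintro y ⟨rfl⟩
            have hks : ⁅k, s⁆ ∈ R :=
              Subgroup.subset_closure (Or.inl ⟨⟨k, s⟩, ⟨hk, hs⟩, rfl⟩)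
            have : ⁅π k, π s⁆ = 1 := by
              rw [← map_commutatorElement]
              exact (hπker _).2 hks
            exact (commutatorElement_eq_one_iff_mul_comm.1 this)
          have : g ∈ (Subgroup.centralizer {π k}).comap π := by
            rw [hS] at hgen; exact hgen (Subgroup.mem_top g)
          have := Subgroup.mem_centralizer_iff.1 (Subgroup.mem_comap.1 this) (π k) rfl
          exact this.symm
        · intro a ha
          simp only [SetLike.mem_coe, Subgroup.mem_comap] at *
          rw [Subgroup.mem_center_iff]
          intro q
          obtain ⟨g, rfl⟩ := QuotientGroup.mk'_surjective R q
          have hag : ⁅a, g⁆ ∈ (⊤ : Subgroup G).lowerCentralSeries (n + 2) :=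
            Subgroup.commutator_mem_commutator ha (Subgroup.mem_top g)
          have : ⁅π a, π g⁆ = 1 := by
            rw [← map_commutatorElement]
            exact (hπker _).2 (Subgroup.subset_closure (Or.inr hag))
          exact (commutatorElement_eq_one_iff_mul_comm.1 this).symm
      intro a ha
      exact Subgroup.mem_comap.1 (hsub ha)
    have hle2 : (⊤ : Subgroup G).lowerCentralSeries (n + 1) ≤ R := by
      show (⁅(⊤ : Subgroup G).lowerCentralSeries n, (⊤ : Subgroup G)⁆ : Subgroup G) ≤ R
      rw [Subgroup.commutator_le]
      intro a ha g _
      have : ⁅π a, π g⁆ = 1 :=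
        commutatorElement_eq_one_iff_mul_comm.2
          ((Subgroup.mem_center_iff.1 (hcentral a ha) (π g)).symm)
      rw [← map_commutatorElement] at this
      exact (hπker _).1 this
    rw [← hRsup]
    exact le_antisymm hle2 hRle

end Aux


open Subgroup

section Part2
universe u
variable {G : Type u} [Group G]

private lemma myFg_sup {H K : Subgroup G} (hH : H.FG) (hK : K.FG) : (H ⊔ K).FG := by
  classical
  obtain ⟨A, hA⟩ := hH
  obtain ⟨B, hB⟩ := hK
  exact ⟨A ∪ B, by rw [Finset.coe_union, Subgroup.closure_union, hA, hB]⟩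

private lemma myFg_closure_of_finite {s : Set G} (hs : s.Finite) : (Subgroup.closure s).FG :=
  (Subgroup.fg_iff _).2 ⟨s, rfl, hs⟩

private lemma myLcs_fg {S : Set G} (hS : Subgroup.closure S = ⊤) (hfin : S.Finite) :
    ∀ (d n : ℕ), (⊤ : Subgroup G).lowerCentralSeries (n + d) = ⊥ → ((⊤ : Subgroup G).lowerCentralSeries n).FG
  | 0, n, h => by
    rw [Nat.add_zero] at h
    rw [h]
    exact ⟨∅, by simp⟩
  | d + 1, n, h => by
    rw [myLcs_eq_closure_sup hS n]
    exact myFg_sup (myFg_closure_of_finite (myKset_finite hfin n))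
      (myLcs_fg hS hfin d (n + 1) (by rw [show n + 1 + d = n + (d + 1) by omega]; exact h))

private lemma myComm_noeth {A : Type u} [CommGroup A] [Group.FG A] (H : Subgroup A) : H.FG := by
  haveI : Module.Finite ℤ (Additive A) := Module.Finite.iff_addGroup_fg.2 inferInstance
  haveI : IsNoetherian ℤ (Additive A) := isNoetherian_of_isNoetherianRing_of_finite ℤ _
  have h := IsNoetherian.noetherian (AddSubgroup.toIntSubmodule (Subgroup.toAddSubgroup H))
  rw [Submodule.fg_iff_addSubgroup_fg] at h
  rw [Subgroup.fg_iff_add_fg]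
  exact h

private lemma myFg_map {H : Subgroup G} {G' : Type u} [Group G'] (f : G →* G') (hH : H.FG) :
    (H.map f).FG := by
  classical
  obtain ⟨A, hA⟩ := hH
  exact ⟨A.image f, by rw [Finset.coe_image, ← MonoidHom.map_closure, hA]⟩

private lemma myFg_of_le_comm {N : Subgroup G} (hN : ∀ a ∈ N, ∀ b ∈ N, a * b = b * a)
    (hNfg : N.FG) {H : Subgroup G} (hH : H ≤ N) : H.FG := by
  letI : CommGroup ↥N :=
    { (inferInstance : Group ↥N) with
      mul_comm := fun a b => Subtype.ext (hN _ a.2 _ b.2) }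
  haveI : Group.FG ↥N := (Group.fg_iff_subgroup_fg N).2 hNfg
  have h1 : (H.subgroupOf N).FG := myComm_noeth _
  have h2 := myFg_map N.subtype h1
  rwa [Subgroup.subgroupOf_map_subtype, inf_eq_left.2 hH] at h2

private lemma myFg_ext {Q : Type u} [Group Q] (f : G →* Q) {H : Subgroup G}
    (h1 : (H.map f).FG) (h2 : (H ⊓ f.ker).FG) : H.FG := by
  classical
  obtain ⟨B, hB⟩ := h1
  obtain ⟨U, hU⟩ := h2
  have hUH : (U : Set G) ⊆ H := fun u hu =>
    (inf_le_left : H ⊓ f.ker ≤ H) (hU ▸ Subgroup.subset_closure hu)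
  -- choose preimages of B inside H
  have hBmem : ∀ b ∈ B, ∃ g, g ∈ H ∧ f g = b := by
    intro b hb
    have : b ∈ H.map f := hB ▸ Subgroup.subset_closure hb
    exact Subgroup.mem_map.1 this
  choose σ hσH hσf using hBmem
  set T : Finset G := B.attach.image (fun b => σ b.1 b.2) with hT
  have hTH : (T : Set G) ⊆ H := by
    intro t ht
    simp only [hT, Finset.coe_image, Set.mem_image, Finset.mem_coe, Finset.mem_attach] at ht
    obtain ⟨b, _, rfl⟩ := ht
    exact hσH _ _
  refine ⟨T ∪ U, le_antisymm ?_ ?_⟩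
  · rw [Subgroup.closure_le, Finset.coe_union]
    exact Set.union_subset hTH hUH
  · intro h hh
    have hfh : f h ∈ Subgroup.closure ((f : G → Q) '' (T : Set G)) := by
      have himg : (f : G → Q) '' (T : Set G) = (B : Set Q) := by
        apply Set.Subset.antisymm
        · rintro q ⟨t, ht, rfl⟩
          simp only [hT, Finset.coe_image, Set.mem_image, Finset.mem_coe] at ht
          obtain ⟨b, _, rfl⟩ := ht
          rw [hσf]
          exact b.2
        · intro q hq
          refine ⟨σ q hq, ?_, hσf _ _⟩
          simp only [hT, Finset.coe_image, Set.mem_image, Finset.mem_coe]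
          exact ⟨⟨q, hq⟩, Finset.mem_attach _ _, rfl⟩
      rw [himg, hB]
      exact ⟨h, hh, rfl⟩
    rw [← MonoidHom.map_closure] at hfh
    obtain ⟨t, ht, hft⟩ := Subgroup.mem_map.1 hfh
    have htH : t ∈ H := by
      have : Subgroup.closure (T : Set G) ≤ H := Subgroup.closure_le _ |>.2 hTH
      exact this ht
    have hker : h * t⁻¹ ∈ H ⊓ f.ker := by
      refine Subgroup.mem_inf.2 ⟨mul_mem hh (inv_mem htH), ?_⟩
      rw [MonoidHom.mem_ker, map_mul, map_inv, hft, mul_inv_cancel]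
    have h1' : h * t⁻¹ ∈ Subgroup.closure ((T ∪ U : Finset G) : Set G) := by
      rw [← hU] at hker
      refine Subgroup.closure_mono ?_ hker
      intro x hx
      simp only [Finset.coe_union, Set.mem_union]
      exact Or.inr hx
    have h2' : t ∈ Subgroup.closure ((T ∪ U : Finset G) : Set G) := by
      refine Subgroup.closure_mono ?_ ht
      intro x hx
      simp only [Finset.coe_union, Set.mem_union]
      exact Or.inl hx
    have : (h * t⁻¹) * t = h := by group
    exact this ▸ mul_mem h1' h2'

private lemma myNoeth : ∀ (n : ℕ) (G : Type u) [Group G] [Group.FG G],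
    (⊤ : Subgroup G).lowerCentralSeries n = ⊥ → ∀ H : Subgroup G, H.FG := by
  intro n
  induction n with
  | zero =>
    intro G _ _ h H
    have hH : H = ⊥ := by
      rw [eq_bot_iff, ← h]
      exact le_top
    rw [hH]
    exact ⟨∅, by simp⟩
  | succ n ih =>
    intro G _ _ h H
    set N := (⊤ : Subgroup G).lowerCentralSeries n with hN
    obtain ⟨S, hS, hSfin⟩ := Group.fg_iff.1 ‹Group.FG G›
    have hNfg : N.FG := myLcs_fg hS hSfin 1 n h
    have hNcomm : ∀ a ∈ N, ∀ b ∈ N, a * b = b * a := by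
      intro a ha b hb
      have hab : ⁅a, b⁆ ∈ (⊤ : Subgroup G).lowerCentralSeries (n + 1) :=
        Subgroup.commutator_mem_commutator ha (Subgroup.mem_top b)
      rw [h] at hab
      exact commutatorElement_eq_one_iff_mul_comm.1 (Subgroup.mem_bot.1 hab)
    haveI : N.Normal := Subgroup.lowerCentralSeries_normal ⊤ n
    set π := QuotientGroup.mk' N with hπ
    haveI : Group.FG (G ⧸ N) := Group.fg_of_surjective (QuotientGroup.mk'_surjective N)
    have hq : (⊤ : Subgroup (G ⧸ N)).lowerCentralSeries n = ⊥ := by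
      rw [← myLcs_map_eq π (QuotientGroup.mk'_surjective N) n]
      rw [eq_bot_iff]
      rintro x ⟨g, hg, rfl⟩
      have : g ∈ π.ker := by rw [QuotientGroup.ker_mk']; exact hg
      rw [MonoidHom.mem_ker] at this
      simp [this]
    have h1 : (H.map π).FG := ih (G ⧸ N) hq (H.map π)
    have h2 : (H ⊓ π.ker).FG := by
      rw [hπ, QuotientGroup.ker_mk']
      exact myFg_of_le_comm hNcomm hNfg inf_le_right
    exact myFg_ext π h1 h2

end Part2
section Part3
universe u
variable {G : Type u} [Group G]

private def myIter (φ : G →* G) : ℕ → G →* G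
  | 0 => MonoidHom.id G
  | n + 1 => φ.comp (myIter φ n)

private lemma myIter_surj {φ : G →* G} (hφ : Function.Surjective φ) :
    ∀ n, Function.Surjective (myIter φ n)
  | 0 => Function.surjective_id
  | n + 1 => hφ.comp (myIter_surj hφ n)

private lemma myIter_ker_mono (φ : G →* G) : Monotone (fun n => (myIter φ n).ker) := by
  apply monotone_nat_of_le_succ
  intro n x hx
  rw [MonoidHom.mem_ker] at hx ⊢
  show φ ((myIter φ n) x) = 1
  rw [hx, map_one]

private lemma myHopf (hno : ∀ H : Subgroup G, H.FG) (φ : G →* G)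
    (hsurj : Function.Surjective φ) : Function.Injective φ := by
  classical
  set K : Subgroup G := ⨆ n, (myIter φ n).ker with hK
  have hdir : Directed (· ≤ ·) (fun n => (myIter φ n).ker) :=
    (myIter_ker_mono φ).directed_le
  obtain ⟨T, hT⟩ := hno K
  have hmem : ∀ t ∈ T, ∃ n, t ∈ (myIter φ n).ker := by
    intro t ht
    have : t ∈ K := hT ▸ Subgroup.subset_closure ht
    rw [hK] at this
    exact (Subgroup.mem_iSup_of_directed hdir).1 this
  set ν : G → ℕ := fun t => if h : ∃ n, t ∈ (myIter φ n).ker then Nat.find h else 0 with hν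
  set N : ℕ := T.sup ν with hNdef
  have hKN : K = (myIter φ N).ker := by
    apply le_antisymm
    · rw [← hT, Subgroup.closure_le]
      intro t ht
      have he := hmem t ht
      have h1 : t ∈ (myIter φ (ν t)).ker := by
        rw [hν]; simp only [he, dif_pos]
        exact Nat.find_spec he
      exact myIter_ker_mono φ (Finset.le_sup ht) h1
    · exact le_iSup (fun n => (myIter φ n).ker) N
  rw [← MonoidHom.ker_eq_bot_iff, eq_bot_iff]
  intro x hx
  obtain ⟨y, rfl⟩ := myIter_surj hsurj N x
  have hy : y ∈ (myIter φ (N + 1)).ker := by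
    rw [MonoidHom.mem_ker]
    show φ ((myIter φ N) y) = 1
    exact hx
  have : y ∈ K := le_iSup (fun n => (myIter φ n).ker) (N + 1) hy
  rw [hKN] at this
  simpa using this

end Part3

/-- A monoid is torsion-free if no nontrivial element has finite order
(the definition removed from Mathlib, restored with its old meaning). -/
def Monoid.IsTorsionFree (G : Type*) [Monoid G] : Prop :=
  ∀ g : G, g ≠ 1 → ¬IsOfFinOrder g

/-- Let `G` be a finitely generated torsion-free nilpotent group and let `φ : G → G` be a
surjective group homomorphism. Then `φ` is injective; in particular, `φ` is an
automorphism (a bijective endomorphism) of `G`. -/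
theorem surjective_endo_of_fg_torsionFree_nilpotent_is_injective
    {G : Type*} [Group G] [Group.FG G] [Group.IsNilpotent G]
    (htf : Monoid.IsTorsionFree G) (φ : G →* G) (hsurj : Function.Surjective φ) :
    Function.Injective φ ∧ Function.Bijective φ := by
  obtain ⟨c, hc⟩ := Subgroup.nilpotent_iff_lowerCentralSeries.1 ‹Group.IsNilpotent G›
  have hinj : Function.Injective φ := myHopf (myNoeth c G hc) φ hsurj
  exact ⟨hinj, hinj, hsurj⟩
end

section
/- Let Γ be a finite undirected simple graph on n vertices. Then the commutator subgroup γ_2(G_Γ) equals the internal direct product of the infinite cyclic subgroups ⟨y_1⟩, …, ⟨y_N⟩ and is free abelian of rank N, and the center Z(G_Γ) equals the internal direct product of γ_2(G_Γ) with the subgroups ⟨x_i⟩ for those vertices x_i of degree n−1; in particular Z(G_Γ) is free abelian of rank N + #{vertices of Γ of degree n−1}. -/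
open scoped commutatorElement

/-- Non-adjacent pairs `(i,j)` with `i < j`. -/
abbrev NonEdge {V : Type} [LinearOrder V] (Γ : SimpleGraph V) : Type :=
  {p : V × V // p.1 < p.2 ∧ ¬ Γ.Adj p.1 p.2}

abbrev GraphGens {V : Type} [LinearOrder V] (Γ : SimpleGraph V) : Type := V ⊕ NonEdge Γ

/-- The relations of the 2-step nilpotent group associated to a graph. -/
def GraphRels {V : Type} [LinearOrder V] (Γ : SimpleGraph V) : Set (FreeGroup (GraphGens Γ)) :=
  {r | (∃ i j : V, Γ.Adj i j ∧
      r = ⁅(FreeGroup.of (Sum.inl j) : FreeGroup (GraphGens Γ)), FreeGroup.of (Sum.inl i)⁆) ∨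
    (∃ p : NonEdge Γ,
      r = ⁅(FreeGroup.of (Sum.inl p.1.2) : FreeGroup (GraphGens Γ)), FreeGroup.of (Sum.inl p.1.1)⁆ *
        (FreeGroup.of (Sum.inr p))⁻¹) ∨
    (∃ (l : V) (p : NonEdge Γ),
      r = ⁅(FreeGroup.of (Sum.inl l) : FreeGroup (GraphGens Γ)), FreeGroup.of (Sum.inr p)⁆)}

/-- The 2-step nilpotent group associated to a graph. -/
abbrev GraphGroup {V : Type} [LinearOrder V] (Γ : SimpleGraph V) : Type :=
  PresentedGroup (GraphRels Γ)

/-- The generator of `GraphGroup Γ` corresponding to the vertex `i`. -/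
def xg {V : Type} [LinearOrder V] (Γ : SimpleGraph V) (i : V) : GraphGroup Γ :=
  PresentedGroup.of (Sum.inl i)

/-- The central generator of `GraphGroup Γ` corresponding to a non-adjacent pair. -/
def yg {V : Type} [LinearOrder V] (Γ : SimpleGraph V) (p : NonEdge Γ) : GraphGroup Γ :=
  PresentedGroup.of (Sum.inr p)

/-- Twisted conjugacy: `a = c * b * (φ c)⁻¹` for some `c`. -/
def TwistedConj {G : Type*} [Group G] (φ : G →* G) (a b : G) : Prop :=
  ∃ c : G, a = c * b * (φ c)⁻¹

/-- The Reidemeister number of an endomorphism: the number of twisted conjugacy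
classes, as an element of `ℕ∞`. -/
noncomputable def reidemeisterNumber {G : Type*} [Group G] (φ : G →* G) : ℕ∞ :=
  ENat.card (Quot (TwistedConj φ))

/-- The Reidemeister spectrum of a group. -/
noncomputable def reidemeisterSpectrum (G : Type*) [Group G] : Set ℕ∞ :=
  {r : ℕ∞ | ∃ φ : G ≃* G, r = reidemeisterNumber φ.toMonoidHom}

/-- `|x|_∞ : ℤ → ℕ∞`. -/
def natAbsInfty (x : ℤ) : ℕ∞ := if x = 0 then ⊤ else (x.natAbs : ℕ∞)

/-- A graph is a (simplicial) join if its vertex set can be partitioned in two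
nonempty parts such that all pairs of vertices in different parts are adjacent. -/
def IsJoinGraph {V : Type*} (Γ : SimpleGraph V) : Prop :=
  ∃ A B : Set V, A.Nonempty ∧ B.Nonempty ∧ Disjoint A B ∧ A ∪ B = Set.univ ∧
    ∀ a ∈ A, ∀ b ∈ B, Γ.Adj a b

namespace GGProof

open scoped IsMulCommutative

variable {n : ℕ} (Γ : SimpleGraph (Fin n)) [DecidableRel Γ.Adj]

/-- The bilinear cocycle. -/
def bb (z w : Fin n → ℤ) : NonEdge Γ → ℤ := fun p => z p.1.2 * w p.1.1

@[ext] structure HH (Γ : SimpleGraph (Fin n)) [DecidableRel Γ.Adj] where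
  z : Fin n → ℤ
  t : NonEdge Γ → ℤ

instance : Mul (HH Γ) := ⟨fun a b => ⟨a.z + b.z, a.t + b.t + bb Γ a.z b.z⟩⟩
instance : One (HH Γ) := ⟨⟨0, 0⟩⟩
instance : Inv (HH Γ) := ⟨fun a => ⟨-a.z, bb Γ a.z a.z - a.t⟩⟩

@[simp] lemma HH.mul_z (a b : HH Γ) : (a * b).z = a.z + b.z := rfl
@[simp] lemma HH.mul_t (a b : HH Γ) : (a * b).t = a.t + b.t + bb Γ a.z b.z := rfl
@[simp] lemma HH.one_z : (1 : HH Γ).z = 0 := rfl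
@[simp] lemma HH.one_t : (1 : HH Γ).t = 0 := rfl
@[simp] lemma HH.inv_z (a : HH Γ) : (a⁻¹).z = -a.z := rfl
@[simp] lemma HH.inv_t (a : HH Γ) : (a⁻¹).t = bb Γ a.z a.z - a.t := rfl

instance : Group (HH Γ) where
  mul_assoc a b c := by
    ext1
    · show (a.z + b.z) + c.z = a.z + (b.z + c.z); ring
    · show (a.t + b.t + bb Γ a.z b.z) + c.t + bb Γ (a.z + b.z) c.z
        = a.t + (b.t + c.t + bb Γ b.z c.z) + bb Γ a.z (b.z + c.z)
      funext p; simp only [bb, Pi.add_apply]; ring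
  one_mul a := by
    ext1
    · show (0 : Fin n → ℤ) + a.z = a.z; simp
    · show (0 : NonEdge Γ → ℤ) + a.t + bb Γ 0 a.z = a.t
      funext p; simp [bb]
  mul_one a := by
    ext1
    · show a.z + 0 = a.z; simp
    · show a.t + 0 + bb Γ a.z 0 = a.t
      funext p; simp [bb]
  inv_mul_cancel a := by
    ext1
    · show -a.z + a.z = 0; simp
    · show (bb Γ a.z a.z - a.t) + a.t + bb Γ (-a.z) a.z = 0
      funext p; simp only [bb, Pi.add_apply, Pi.sub_apply, Pi.neg_apply, Pi.zero_apply]; ring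

lemma HH.commutatorElement (a b : HH Γ) :
    ⁅a, b⁆ = ⟨0, bb Γ a.z b.z - bb Γ b.z a.z⟩ := by
  show a * b * a⁻¹ * b⁻¹ = _
  ext1
  · simp only [HH.mul_z, HH.inv_z]
    abel
  · simp only [HH.mul_t, HH.mul_z, HH.inv_t, HH.inv_z]
    funext p
    simp only [bb, Pi.add_apply, Pi.sub_apply, Pi.neg_apply]
    ring

lemma HH.zpow_of (a : HH Γ) (hz : bb Γ a.z a.z = 0) (b : ℤ) :
    a ^ b = HH.mk (b • a.z) (b • a.t) := by
  have key : ∀ (c : ℤ) (w : Fin n → ℤ), (∀ q, w q = a.z q ∨ w q = -a.z q) →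
      bb Γ (c • a.z) w = 0 := by
    intro c w hw; funext p
    have h0 := congrFun hz p
    simp only [bb, Pi.zero_apply] at h0 ⊢
    simp only [Pi.smul_apply, smul_eq_mul]
    rcases hw p.1.1 with h | h <;> rw [h] <;>
      [skip; rw [mul_neg]] <;> rw [mul_assoc, h0, mul_zero] <;> simp
  have key1 : ∀ c : ℤ, bb Γ (c • a.z) a.z = 0 := fun c => key c a.z (fun q => Or.inl rfl)
  have key2 : ∀ c : ℤ, bb Γ (c • a.z) (-a.z) = 0 :=
    fun c => key c (-a.z) (fun q => Or.inr rfl)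
  induction b using Int.induction_on with
  | zero => ext1 <;> simp [zero_smul] <;> rfl
  | succ k ih =>
      rw [zpow_add_one, ih]
      ext1
      · show (k : ℤ) • a.z + a.z = _
        rw [add_smul, one_smul]
      · show (k : ℤ) • a.t + a.t + bb Γ ((k:ℤ) • a.z) a.z = ((k:ℤ) + 1) • a.t
        rw [key1, add_zero, add_smul, one_smul]
  | pred k ih =>
      rw [zpow_sub_one, ih]
      have hinv : a⁻¹ = HH.mk (-a.z) (-a.t) := by
        ext1
        · rfl
        · show bb Γ a.z a.z - a.t = -a.t; rw [hz, zero_sub]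
      rw [hinv]
      ext1
      · show (-k : ℤ) • a.z + -a.z = (-(k:ℤ) - 1) • a.z
        rw [sub_smul, one_smul, sub_eq_add_neg]
      · show (-k : ℤ) • a.t + -a.t + bb Γ ((-k:ℤ) • a.z) (-a.z) = (-(k:ℤ) - 1) • a.t
        rw [key2, add_zero, sub_smul, one_smul, sub_eq_add_neg]

/-- Images of the generators in `HH`. -/
def fgen : GraphGens Γ → HH Γ :=
  Sum.elim (fun i => ⟨Pi.single i 1, 0⟩) (fun p => ⟨0, Pi.single p 1⟩)

lemma hrels : ∀ r ∈ GraphRels Γ, FreeGroup.lift (fgen Γ) r = 1 := by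
  rintro r (⟨i, j, hadj, rfl⟩ | ⟨p, rfl⟩ | ⟨l, p, rfl⟩)
  · rw [map_commutatorElement]
    simp only [FreeGroup.lift_apply_of, fgen, Sum.elim_inl]
    rw [HH.commutatorElement]
    ext1
    · rfl
    · show bb Γ (Pi.single j 1) (Pi.single i 1) - bb Γ (Pi.single i 1) (Pi.single j 1) = 0
      funext p
      simp only [bb, Pi.sub_apply, Pi.zero_apply, Pi.single_apply]
      have h1 : ¬(p.1.2 = j ∧ p.1.1 = i) := by
        rintro ⟨h2, h1⟩; exact p.2.2 (h1 ▸ h2 ▸ hadj)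
      have h2 : ¬(p.1.2 = i ∧ p.1.1 = j) := by
        rintro ⟨h2, h1⟩; exact p.2.2 (h1 ▸ h2 ▸ hadj.symm)
      by_cases e1 : p.1.2 = j <;> by_cases e2 : p.1.1 = i <;>
        by_cases e3 : p.1.2 = i <;> by_cases e4 : p.1.1 = j <;>
        simp_all
  · rw [map_mul, map_inv, map_commutatorElement]
    simp only [FreeGroup.lift_apply_of, fgen, Sum.elim_inl, Sum.elim_inr]
    rw [HH.commutatorElement, mul_inv_eq_one]
    ext1
    · rfl
    · show bb Γ (Pi.single p.1.2 1) (Pi.single p.1.1 1)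
        - bb Γ (Pi.single p.1.1 1) (Pi.single p.1.2 1) = Pi.single p 1
      funext q
      simp only [bb, Pi.sub_apply, Pi.single_apply]
      by_cases hq : q = p
      · subst hq
        have hne : ¬ q.1.2 = q.1.1 := (ne_of_gt q.2.1)
        simp [hne]
      · have h1 : ¬(q.1.2 = p.1.2 ∧ q.1.1 = p.1.1) := by
          rintro ⟨h2, h1⟩
          exact hq (Subtype.ext (Prod.ext h1 h2))
        have h2 : ¬(q.1.2 = p.1.1 ∧ q.1.1 = p.1.2) := by
          rintro ⟨h2, h1⟩
          exact absurd (h1 ▸ h2 ▸ q.2.1) (not_lt.mpr (le_of_lt p.2.1))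
        by_cases e1 : q.1.2 = p.1.2 <;> by_cases e2 : q.1.1 = p.1.1 <;>
          by_cases e3 : q.1.2 = p.1.1 <;> by_cases e4 : q.1.1 = p.1.2 <;>
          simp_all
  · rw [map_commutatorElement]
    simp only [FreeGroup.lift_apply_of, fgen, Sum.elim_inl, Sum.elim_inr]
    rw [HH.commutatorElement]
    ext1
    · rfl
    · show bb Γ (Pi.single l 1) 0 - bb Γ 0 (Pi.single l 1) = 0
      funext q; simp [bb]

/-- The homomorphism to the concrete model. -/
def φφ : GraphGroup Γ →* HH Γ := PresentedGroup.toGroup (hrels Γ)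

@[simp] lemma phi_x (i : Fin n) : φφ Γ (xg Γ i) = ⟨Pi.single i 1, 0⟩ :=
  PresentedGroup.toGroup.of _

@[simp] lemma phi_y (p : NonEdge Γ) : φφ Γ (yg Γ p) = ⟨0, Pi.single p 1⟩ :=
  PresentedGroup.toGroup.of _

lemma rel_eq_one (r : FreeGroup (GraphGens Γ)) (hr : r ∈ GraphRels Γ) :
    PresentedGroup.mk (GraphRels Γ) r = 1 := by
  have : r ∈ Subgroup.normalClosure (GraphRels Γ) := Subgroup.subset_normalClosure hr
  exact (QuotientGroup.eq_one_iff r).mpr this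

lemma rel1 {i j : Fin n} (h : Γ.Adj i j) : ⁅xg Γ j, xg Γ i⁆ = 1 := by
  have := rel_eq_one Γ _ (Or.inl ⟨i, j, h, rfl⟩)
  rwa [map_commutatorElement] at this

lemma rel2 (p : NonEdge Γ) : ⁅xg Γ p.1.2, xg Γ p.1.1⁆ = yg Γ p := by
  have := rel_eq_one Γ _ (Or.inr (Or.inl ⟨p, rfl⟩))
  rw [map_mul, map_inv, map_commutatorElement, mul_inv_eq_one] at this
  exact this

lemma rel3 (l : Fin n) (p : NonEdge Γ) : Commute (xg Γ l) (yg Γ p) := by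
  have := rel_eq_one Γ _ (Or.inr (Or.inr ⟨l, p, rfl⟩))
  rw [map_commutatorElement] at this
  exact commutatorElement_eq_one_iff_commute.mp this

lemma yg_comm (p : NonEdge Γ) (g : GraphGroup Γ) : Commute g (yg Γ p) := by
  have hg : g ∈ Subgroup.centralizer {yg Γ p} := by
    refine PresentedGroup.generated_by _ (Subgroup.centralizer {yg Γ p}) ?_ g
    rintro (i | q) <;> refine Subgroup.mem_centralizer_iff.mpr ?_ <;>
      intro y hy <;> rw [Set.mem_singleton_iff] at hy <;> subst hy
    · exact (rel3 Γ i p).symm.eq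
    · show yg Γ p * yg Γ q = yg Γ q * yg Γ p
      refine Commute.eq ?_
      show Commute (yg Γ p) (yg Γ q)
      rw [← rel2 Γ q, commutatorElement_def]
      have ha := rel3 Γ q.1.2 p
      have hb := rel3 Γ q.1.1 p
      exact (((ha.mul_left hb).mul_left ha.inv_left).mul_left hb.inv_left).symm
  show g * yg Γ p = yg Γ p * g
  exact (Subgroup.mem_centralizer_iff.mp hg (yg Γ p) rfl).symm

lemma yg_central (p : NonEdge Γ) : yg Γ p ∈ Subgroup.center (GraphGroup Γ) :=
  Subgroup.mem_center_iff.mpr fun g => (yg_comm Γ p g).eq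

lemma degree_eq_iff (j : Fin n) :
    Γ.degree j = n - 1 ↔ ∀ k, k ≠ j → Γ.Adj j k := by
  constructor
  · intro h k hk
    have hsub : Γ.neighborFinset j ⊆ Finset.univ.erase j := by
      intro a ha
      rw [SimpleGraph.mem_neighborFinset] at ha
      exact Finset.mem_erase.mpr ⟨ha.ne', Finset.mem_univ a⟩
    have hcard : (Finset.univ.erase j).card ≤ (Γ.neighborFinset j).card := by
      rw [Finset.card_erase_of_mem (Finset.mem_univ j), Finset.card_univ, Fintype.card_fin]
      have : (Γ.neighborFinset j).card = Γ.degree j := rfl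
      omega
    have heq := Finset.eq_of_subset_of_card_le hsub hcard
    have hk' : k ∈ Γ.neighborFinset j := by
      rw [heq]; exact Finset.mem_erase.mpr ⟨hk, Finset.mem_univ k⟩
    rwa [SimpleGraph.mem_neighborFinset] at hk'
  · intro h
    have heq : Γ.neighborFinset j = Finset.univ.erase j := by
      ext k
      rw [SimpleGraph.mem_neighborFinset, Finset.mem_erase]
      exact ⟨fun ha => ⟨ha.ne', Finset.mem_univ k⟩, fun hk => h k hk.1⟩
    rw [← SimpleGraph.card_neighborFinset_eq_degree, heq,
      Finset.card_erase_of_mem (Finset.mem_univ j), Finset.card_univ, Fintype.card_fin]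

lemma xg_central {i : Fin n} (h : Γ.degree i = n - 1) :
    xg Γ i ∈ Subgroup.center (GraphGroup Γ) := by
  refine Subgroup.mem_center_iff.mpr fun g => ?_
  have hg : g ∈ Subgroup.centralizer {xg Γ i} := by
    refine PresentedGroup.generated_by _ (Subgroup.centralizer {xg Γ i}) ?_ g
    rintro (j | q) <;> refine Subgroup.mem_centralizer_iff.mpr ?_ <;>
      intro y hy <;> rw [Set.mem_singleton_iff] at hy <;> subst hy
    · show xg Γ i * xg Γ j = xg Γ j * xg Γ i
      refine Commute.eq ?_
      by_cases hj : j = i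
      · subst hj; exact Commute.refl _
      · have hadj : Γ.Adj i j := (degree_eq_iff Γ i).mp h j hj
        exact (commutatorElement_eq_one_iff_commute.mp (rel1 Γ hadj)).symm
    · show xg Γ i * yg Γ q = yg Γ q * xg Γ i
      exact (yg_comm Γ q (xg Γ i)).eq
  exact (Subgroup.mem_centralizer_iff.mp hg (xg Γ i) rfl).symm

/-- The vertices of full degree. -/
abbrev FullDeg (Γ : SimpleGraph (Fin n)) [DecidableRel Γ.Adj] : Type :=
  {i : Fin n // Γ.degree i = n - 1}

def yC (p : NonEdge Γ) : Subgroup.center (GraphGroup Γ) := ⟨yg Γ p, yg_central Γ p⟩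
def xC (i : FullDeg Γ) : Subgroup.center (GraphGroup Γ) := ⟨xg Γ i.1, xg_central Γ i.2⟩

noncomputable def mHom : Multiplicative (NonEdge Γ →₀ ℤ) →* GraphGroup Γ :=
  (Subgroup.center (GraphGroup Γ)).subtype.comp
    (AddMonoidHom.toMultiplicativeLeft
      (Finsupp.liftAddHom fun p => zmultiplesHom _ (Additive.ofMul (yC Γ p))))

noncomputable def MHom : Multiplicative ((NonEdge Γ ⊕ FullDeg Γ) →₀ ℤ) →* GraphGroup Γ :=
  (Subgroup.center (GraphGroup Γ)).subtype.comp
    (AddMonoidHom.toMultiplicativeLeft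
      (Finsupp.liftAddHom fun s => zmultiplesHom _ (Additive.ofMul (Sum.elim (yC Γ) (xC Γ) s))))

lemma mHom_mem_center (f : Multiplicative (NonEdge Γ →₀ ℤ)) :
    mHom Γ f ∈ Subgroup.center (GraphGroup Γ) := SetLike.coe_mem _

lemma MHom_mem_center (f : Multiplicative ((NonEdge Γ ⊕ FullDeg Γ) →₀ ℤ)) :
    MHom Γ f ∈ Subgroup.center (GraphGroup Γ) := SetLike.coe_mem _

lemma mHom_single (p : NonEdge Γ) (b : ℤ) :
    mHom Γ (Multiplicative.ofAdd (Finsupp.single p b)) = yg Γ p ^ b := by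
  simp only [mHom, MonoidHom.comp_apply, AddMonoidHom.coe_toMultiplicativeLeft,
    Function.comp_apply, toAdd_ofAdd, Finsupp.liftAddHom_apply_single, zmultiplesHom_apply,
    toMul_zsmul, toMul_ofMul]
  rw [Subgroup.coe_subtype, SubgroupClass.coe_zpow]
  rfl

lemma MHom_single_inl (p : NonEdge Γ) (b : ℤ) :
    MHom Γ (Multiplicative.ofAdd (Finsupp.single (Sum.inl p) b)) = yg Γ p ^ b := by
  simp only [MHom, MonoidHom.comp_apply, AddMonoidHom.coe_toMultiplicativeLeft,
    Function.comp_apply, toAdd_ofAdd, Finsupp.liftAddHom_apply_single, zmultiplesHom_apply,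
    toMul_zsmul, toMul_ofMul]
  rw [Subgroup.coe_subtype, SubgroupClass.coe_zpow]
  rfl

lemma MHom_single_inr (i : FullDeg Γ) (b : ℤ) :
    MHom Γ (Multiplicative.ofAdd (Finsupp.single (Sum.inr i) b)) = xg Γ i.1 ^ b := by
  simp only [MHom, MonoidHom.comp_apply, AddMonoidHom.coe_toMultiplicativeLeft,
    Function.comp_apply, toAdd_ofAdd, Finsupp.liftAddHom_apply_single, zmultiplesHom_apply,
    toMul_zsmul, toMul_ofMul]
  rw [Subgroup.coe_subtype, SubgroupClass.coe_zpow]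
  rfl

lemma smul_pi_single {α : Type*} [DecidableEq α] (i : α) (b : ℤ) :
    b • (Pi.single i (1 : ℤ) : α → ℤ) = Pi.single i b := by
  funext k
  simp only [Pi.smul_apply, Pi.single_apply, smul_eq_mul]
  split <;> simp

lemma phi_x_zpow (i : Fin n) (b : ℤ) :
    φφ Γ (xg Γ i ^ b) = ⟨Pi.single i b, 0⟩ := by
  rw [map_zpow, phi_x, HH.zpow_of]
  · ext1
    · exact smul_pi_single i b
    · show b • (0 : NonEdge Γ → ℤ) = 0; simp
  · funext q
    simp only [bb, Pi.single_apply, Pi.zero_apply]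
    have : ¬(q.1.2 = i ∧ q.1.1 = i) := by
      rintro ⟨h1, h2⟩; have hlt := q.2.1; rw [h1, h2] at hlt; exact lt_irrefl i hlt
    by_cases e1 : q.1.2 = i <;> by_cases e2 : q.1.1 = i <;> simp_all

lemma phi_y_zpow (p : NonEdge Γ) (b : ℤ) :
    φφ Γ (yg Γ p ^ b) = ⟨0, Pi.single p b⟩ := by
  rw [map_zpow, phi_y, HH.zpow_of]
  · ext1
    · show b • (0 : Fin n → ℤ) = 0; simp
    · exact smul_pi_single p b
  · funext q; simp [bb]

lemma phi_m (f : NonEdge Γ →₀ ℤ) :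
    φφ Γ (mHom Γ (Multiplicative.ofAdd f)) = ⟨0, ⇑f⟩ := by
  induction f using Finsupp.induction with
  | zero =>
      rw [show Multiplicative.ofAdd (0 : NonEdge Γ →₀ ℤ) = 1 from rfl, map_one, map_one]
      ext1
      · rfl
      · show (0 : NonEdge Γ → ℤ) = ⇑(0 : NonEdge Γ →₀ ℤ); simp
  | single_add p b f hpf hb ih =>
      rw [ofAdd_add, map_mul, map_mul, mHom_single, phi_y_zpow, ih]
      ext1
      · show (0 : Fin n → ℤ) + 0 = 0; simp
      · show Pi.single p b + ⇑f + bb Γ 0 0 = ⇑(Finsupp.single p b + f)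
        funext q
        simp [bb, Finsupp.add_apply, Finsupp.single_apply, Pi.single_apply, eq_comm]

/-- The expected first component of `φφ ∘ MHom`. -/
def Zf (s : (NonEdge Γ ⊕ FullDeg Γ) →₀ ℤ) : Fin n → ℤ :=
  fun v => if h : Γ.degree v = n - 1 then s (Sum.inr ⟨v, h⟩) else 0

/-- The expected second component of `φφ ∘ MHom`. -/
def Tf (s : (NonEdge Γ ⊕ FullDeg Γ) →₀ ℤ) : NonEdge Γ → ℤ := fun q => s (Sum.inl q)

lemma bb_right_supported (z w : Fin n → ℤ)
    (hw : ∀ v, w v ≠ 0 → Γ.degree v = n - 1) : bb Γ z w = 0 := by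
  funext q
  simp only [bb, Pi.zero_apply]
  rcases eq_or_ne (w q.1.1) 0 with h | h
  · rw [h, mul_zero]
  · exact absurd ((degree_eq_iff Γ q.1.1).mp (hw _ h) q.1.2 (ne_of_gt q.2.1)) q.2.2

lemma Zf_supported (s : (NonEdge Γ ⊕ FullDeg Γ) →₀ ℤ) (v : Fin n) (h : Zf Γ s v ≠ 0) :
    Γ.degree v = n - 1 := by
  by_contra hv
  exact h (dif_neg hv)

lemma phi_M (s : (NonEdge Γ ⊕ FullDeg Γ) →₀ ℤ) :
    φφ Γ (MHom Γ (Multiplicative.ofAdd s)) = ⟨Zf Γ s, Tf Γ s⟩ := by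
  induction s using Finsupp.induction with
  | zero =>
      rw [show Multiplicative.ofAdd (0 : (NonEdge Γ ⊕ FullDeg Γ) →₀ ℤ) = 1 from rfl,
        map_one, map_one]
      ext1
      · show (0 : Fin n → ℤ) = Zf Γ 0
        funext v; simp [Zf]
      · show (0 : NonEdge Γ → ℤ) = Tf Γ 0
        funext q; simp [Tf]
  | single_add a b s has hb ih =>
      rw [ofAdd_add, map_mul, map_mul]
      rcases a with p | i
      · rw [MHom_single_inl, phi_y_zpow, ih]
        ext1
        · show (0 : Fin n → ℤ) + Zf Γ s = Zf Γ (Finsupp.single (Sum.inl p) b + s)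
          funext v
          simp only [Pi.add_apply, Pi.zero_apply, Zf, zero_add]
          split <;> simp [Finsupp.add_apply, Finsupp.single_apply]
        · show Pi.single p b + Tf Γ s + bb Γ 0 (Zf Γ s) = Tf Γ (Finsupp.single (Sum.inl p) b + s)
          funext q
          simp [bb, Tf, Finsupp.add_apply, Finsupp.single_apply, Pi.single_apply, eq_comm]
      · rw [MHom_single_inr, phi_x_zpow, ih]
        ext1
        · show Pi.single i.1 b + Zf Γ s = Zf Γ (Finsupp.single (Sum.inr i) b + s)
          funext v
          simp only [Pi.add_apply, Pi.single_apply, Zf, Finsupp.add_apply, Finsupp.single_apply]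
          by_cases h : Γ.degree v = n - 1
          · rw [dif_pos h, dif_pos h]
            have : ((Sum.inr i : NonEdge Γ ⊕ FullDeg Γ) = Sum.inr (⟨v, h⟩ : FullDeg Γ)) ↔ v = i.1 := by
              constructor
              · intro he
                have := Sum.inr.inj he
                exact (congrArg Subtype.val this).symm
              · intro he
                subst he
                rfl
            by_cases hv : v = i.1 <;> simp [this, hv]
          · rw [dif_neg h, dif_neg h]
            have hvi : v ≠ i.1 := fun he => h (he ▸ i.2)
            simp [hvi]
        · show (0 : NonEdge Γ → ℤ) + Tf Γ s + bb Γ (Pi.single i.1 b) (Zf Γ s)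
            = Tf Γ (Finsupp.single (Sum.inr i) b + s)
          rw [bb_right_supported Γ _ _ (Zf_supported Γ s)]
          funext q
          simp [Tf, Finsupp.add_apply, Finsupp.single_apply]

def XX (w : Fin n → ℤ) : GraphGroup Γ :=
  ((List.finRange n).map fun i => xg Γ i ^ w i).prod

lemma XX_zero : XX Γ 0 = 1 := by
  refine List.prod_eq_one ?_
  intro x hx
  simp only [List.mem_map] at hx
  obtain ⟨i, _, rfl⟩ := hx
  simp

lemma bb_zero_right (z : Fin n → ℤ) : bb Γ z 0 = 0 := by
  funext q; simp [bb]

lemma bb_zero_left (z : Fin n → ℤ) : bb Γ 0 z = 0 := by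
  funext q; simp [bb]

lemma prod_singles (w : Fin n → ℤ) (L : List (Fin n)) (hL : L.Pairwise (· < ·)) :
    (L.map fun i => (⟨Pi.single i (w i), 0⟩ : HH Γ)).prod
      = ⟨fun i => if i ∈ L then w i else 0, 0⟩ := by
  induction L with
  | nil =>
      rw [List.map_nil, List.prod_nil]
      ext1
      · funext v; simp
      · rfl
  | cons a L ih =>
      have ha := List.pairwise_cons.mp hL
      rw [List.map_cons, List.prod_cons, ih ha.2]
      have hanotL : a ∉ L := fun hmem => lt_irrefl a (ha.1 a hmem)
      ext1
      · simp only [HH.mul_z]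
        funext v
        simp only [Pi.add_apply, Pi.single_apply]
        by_cases hv : v = a
        · subst hv
          simp [hanotL]
        · simp [hv, List.mem_cons, fun h => hv h]
      · show (0 : NonEdge Γ → ℤ) + 0 + bb Γ (Pi.single a (w a)) _ = 0
        funext q
        simp only [Pi.add_apply, Pi.zero_apply, zero_add, bb, Pi.single_apply]
        by_cases e : q.1.2 = a
        · by_cases m : q.1.1 ∈ L
          · exfalso
            have h1 : a < q.1.1 := ha.1 _ m
            have h2 : q.1.1 < a := e ▸ q.2.1
            exact lt_irrefl a (h1.trans h2)
          · simp [m]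
        · simp [e]

lemma phi_X (w : Fin n → ℤ) : φφ Γ (XX Γ w) = ⟨w, 0⟩ := by
  rw [XX, map_list_prod, List.map_map]
  have hmap : (φφ Γ ∘ fun i => xg Γ i ^ w i) = fun i => (⟨Pi.single i (w i), 0⟩ : HH Γ) := by
    funext i
    exact phi_x_zpow Γ i (w i)
  rw [hmap, prod_singles Γ w _ (List.pairwise_lt_finRange n)]
  ext1
  · funext v; simp [List.mem_finRange]
  · rfl

lemma range_normal : ((mHom Γ).range).Normal := by
  constructor
  intro x hx g
  obtain ⟨f, rfl⟩ := hx
  have hc := Subgroup.mem_center_iff.mp (mHom_mem_center Γ f) g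
  rw [hc, mul_assoc, mul_inv_cancel, mul_one]
  exact ⟨f, rfl⟩

lemma yg_mem_range (p : NonEdge Γ) : yg Γ p ∈ (mHom Γ).range :=
  ⟨Multiplicative.ofAdd (Finsupp.single p 1), by rw [mHom_single, zpow_one]⟩

lemma comm_mem (g h : GraphGroup Γ) : ⁅g, h⁆ ∈ (mHom Γ).range := by
  letI := range_normal Γ
  set R := (mHom Γ).range with hR
  have key : ∀ x x' : GraphGens Γ,
      Commute (QuotientGroup.mk' R (PresentedGroup.of x))
        (QuotientGroup.mk' R (PresentedGroup.of x')) := by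
    have hy : ∀ (q : NonEdge Γ) (a : GraphGroup Γ),
        Commute (QuotientGroup.mk' R a) (QuotientGroup.mk' R (yg Γ q)) :=
      fun q a => (yg_comm Γ q a).map (QuotientGroup.mk' R)
    rintro (i | p) (j | q)
    · rcases eq_or_ne i j with rfl | hij
      · exact Commute.refl _
      · by_cases hadj : Γ.Adj i j
        · exact ((commutatorElement_eq_one_iff_commute.mp (rel1 Γ hadj)).symm).map _
        · rcases lt_or_gt_of_ne hij with hlt | hgt
          · have hp : (QuotientGroup.mk' R) (yg Γ ⟨(i, j), hlt, hadj⟩) = 1 :=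
              (QuotientGroup.eq_one_iff _).mpr (yg_mem_range Γ _)
            have h2 := rel2 Γ ⟨(i, j), hlt, hadj⟩
            have : ⁅(QuotientGroup.mk' R) (xg Γ j), (QuotientGroup.mk' R) (xg Γ i)⁆ = 1 := by
              rw [← map_commutatorElement, h2, hp]
            exact (commutatorElement_eq_one_iff_commute.mp this).symm
          · have hadj' : ¬ Γ.Adj j i := fun hh => hadj hh.symm
            have hp : (QuotientGroup.mk' R) (yg Γ ⟨(j, i), hgt, hadj'⟩) = 1 :=
              (QuotientGroup.eq_one_iff _).mpr (yg_mem_range Γ _)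
            have h2 := rel2 Γ ⟨(j, i), hgt, hadj'⟩
            have : ⁅(QuotientGroup.mk' R) (xg Γ i), (QuotientGroup.mk' R) (xg Γ j)⁆ = 1 := by
              rw [← map_commutatorElement, h2, hp]
            exact commutatorElement_eq_one_iff_commute.mp this
    · exact hy q _
    · exact ((yg_comm Γ p (xg Γ j)).map _).symm
    · exact hy q _
  have hgen : ∀ (x : GraphGens Γ),
      (QuotientGroup.mk' R (PresentedGroup.of x)) ∈
        Subgroup.center (GraphGroup Γ ⧸ R) := by
    intro x
    refine Subgroup.mem_center_iff.mpr fun qq => ?_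
    obtain ⟨a, rfl⟩ := QuotientGroup.mk'_surjective R qq
    suffices ha : a ∈ Subgroup.comap (QuotientGroup.mk' R)
        (Subgroup.centralizer {QuotientGroup.mk' R (PresentedGroup.of x)}) by
      exact (Subgroup.mem_centralizer_iff.mp (Subgroup.mem_comap.mp ha) _ rfl).symm
    refine PresentedGroup.generated_by _ _ ?_ a
    intro x'
    rw [Subgroup.mem_comap, Subgroup.mem_centralizer_iff]
    intro y hy; rw [Set.mem_singleton_iff] at hy; subst hy
    exact (key x x').eq
  suffices hone : (QuotientGroup.mk' R) ⁅g, h⁆ = 1 by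
    exact (QuotientGroup.eq_one_iff _).mp hone
  rw [map_commutatorElement, commutatorElement_eq_one_iff_commute]
  suffices hg2 : g ∈ Subgroup.comap (QuotientGroup.mk' R)
      (Subgroup.centralizer {QuotientGroup.mk' R h}) by
    exact (Subgroup.mem_centralizer_iff.mp (Subgroup.mem_comap.mp hg2) _ rfl).symm
  refine PresentedGroup.generated_by _ _ ?_ g
  intro x
  rw [Subgroup.mem_comap, Subgroup.mem_centralizer_iff]
  intro y hy; rw [Set.mem_singleton_iff] at hy; subst hy
  exact Subgroup.mem_center_iff.mp (hgen x) _

lemma exists_w (g : GraphGroup Γ) :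
    ∃ w : Fin n →₀ ℤ, (XX Γ ⇑w)⁻¹ * g ∈ (mHom Γ).range := by
  letI := range_normal Γ
  set R := (mHom Γ).range with hRdef
  letI : CommGroup (GraphGroup Γ ⧸ R) :=
    { (inferInstance : Group (GraphGroup Γ ⧸ R)) with
      mul_comm := by
        intro a b
        obtain ⟨x, rfl⟩ := QuotientGroup.mk'_surjective R a
        obtain ⟨y, rfl⟩ := QuotientGroup.mk'_surjective R b
        have : ⁅(QuotientGroup.mk' R) x, (QuotientGroup.mk' R) y⁆ = 1 := by
          rw [← map_commutatorElement]
          exact (QuotientGroup.eq_one_iff _).mpr (comm_mem Γ x y)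
        exact (commutatorElement_eq_one_iff_commute.mp this).eq }
  set u : Multiplicative (Fin n →₀ ℤ) →* GraphGroup Γ ⧸ R :=
    AddMonoidHom.toMultiplicativeLeft
      (Finsupp.liftAddHom fun i =>
        zmultiplesHom _ (Additive.ofMul (QuotientGroup.mk' R (xg Γ i)))) with hu
  have hu_single : ∀ (i : Fin n) (b : ℤ),
      u (Multiplicative.ofAdd (Finsupp.single i b)) = (QuotientGroup.mk' R (xg Γ i)) ^ b := by
    intro i b
    simp only [hu, AddMonoidHom.coe_toMultiplicativeLeft, Function.comp_apply, toAdd_ofAdd,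
      Finsupp.liftAddHom_apply_single, zmultiplesHom_apply, toMul_zsmul, toMul_ofMul]
  have hmkXX : ∀ w : Fin n → ℤ,
      QuotientGroup.mk' R (XX Γ w) = ∏ i : Fin n, (QuotientGroup.mk' R (xg Γ i)) ^ w i := by
    intro w
    rw [XX, map_list_prod, List.map_map, Fin.prod_univ_def]
    rfl
  have hu_eq : ∀ w : Fin n →₀ ℤ,
      u (Multiplicative.ofAdd w) = QuotientGroup.mk' R (XX Γ ⇑w) := by
    intro w
    induction w using Finsupp.induction with
    | zero =>
        rw [show Multiplicative.ofAdd (0 : Fin n →₀ ℤ) = 1 from rfl, map_one,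
          Finsupp.coe_zero, XX_zero, map_one]
    | single_add a b f haf hb ih =>
        rw [ofAdd_add, map_mul, ih, hu_single, hmkXX, Finsupp.coe_add, hmkXX]
        have hsplit : ∀ i : Fin n,
            (QuotientGroup.mk' R (xg Γ i)) ^ (⇑(Finsupp.single a b) + ⇑f) i
              = (QuotientGroup.mk' R (xg Γ i)) ^ (Finsupp.single a b) i
                * (QuotientGroup.mk' R (xg Γ i)) ^ f i := by
          intro i
          rw [Pi.add_apply, zpow_add]
        rw [Finset.prod_congr rfl fun i _ => hsplit i, Finset.prod_mul_distrib]
        congr 1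
        refine Eq.symm ?_
        calc ∏ i : Fin n, (QuotientGroup.mk' R (xg Γ i)) ^ (Finsupp.single a b) i
            = ∏ i : Fin n, (if a = i then (QuotientGroup.mk' R (xg Γ a)) ^ b else 1) := by
              refine Finset.prod_congr rfl fun i _ => ?_
              rw [Finsupp.single_apply]
              split
              · rename_i hai; subst hai; rfl
              · exact zpow_zero _
          _ = (QuotientGroup.mk' R (xg Γ a)) ^ b := by
              rw [Finset.prod_ite_eq]
              simp
  have hsub : ∀ a : GraphGroup Γ,
      ∃ w : Fin n →₀ ℤ, QuotientGroup.mk' R a = u (Multiplicative.ofAdd w) := by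
    intro a
    set T : Subgroup (GraphGroup Γ) :=
      { carrier := {a | ∃ w : Fin n →₀ ℤ, QuotientGroup.mk' R a = u (Multiplicative.ofAdd w)}
        one_mem' := ⟨0, by rw [map_one, show Multiplicative.ofAdd (0 : Fin n →₀ ℤ) = 1 from rfl,
          map_one]⟩
        mul_mem' := by
          rintro x y ⟨wx, hx⟩ ⟨wy, hy⟩
          exact ⟨wx + wy, by rw [map_mul, hx, hy, ofAdd_add, map_mul]⟩
        inv_mem' := by
          rintro x ⟨wx, hx⟩
          refine ⟨-wx, ?_⟩
          rw [map_inv, hx, show Multiplicative.ofAdd (-wx) = (Multiplicative.ofAdd wx)⁻¹ from rfl,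
            map_inv] } with hT
    refine PresentedGroup.generated_by _ T ?_ a
    rintro (i | p)
    · exact ⟨Finsupp.single i 1, by rw [hu_single, zpow_one]; rfl⟩
    · refine ⟨0, ?_⟩
      rw [show Multiplicative.ofAdd (0 : Fin n →₀ ℤ) = 1 from rfl, map_one]
      exact (QuotientGroup.eq_one_iff _).mpr (yg_mem_range Γ p)
  obtain ⟨w, hw⟩ := hsub g
  refine ⟨w, ?_⟩
  have : QuotientGroup.mk' R ((XX Γ ⇑w)⁻¹ * g) = 1 := by
    rw [map_mul, map_inv, hw, hu_eq, inv_mul_cancel]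
  exact (QuotientGroup.eq_one_iff _).mp this

lemma decomp (g : GraphGroup Γ) :
    ∃ (w : Fin n →₀ ℤ) (t : NonEdge Γ →₀ ℤ),
      g = XX Γ ⇑w * mHom Γ (Multiplicative.ofAdd t) ∧ φφ Γ g = ⟨⇑w, ⇑t⟩ := by
  obtain ⟨w, ⟨tM, htM⟩⟩ := exists_w Γ g
  refine ⟨w, tM.toAdd, ?_, ?_⟩
  · rw [show Multiplicative.ofAdd tM.toAdd = tM from rfl, htM, mul_inv_cancel_left]
  · have hg : g = XX Γ ⇑w * mHom Γ tM := by rw [htM, mul_inv_cancel_left]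
    rw [hg, map_mul, phi_X, show (mHom Γ) tM = (mHom Γ) (Multiplicative.ofAdd tM.toAdd) from rfl,
      phi_m]
    ext1
    · show ⇑w + 0 = ⇑w; simp
    · show 0 + ⇑tM.toAdd + bb Γ (⇑w) 0 = ⇑tM.toAdd
      rw [bb_zero_right]; simp

lemma phi_inj : Function.Injective (φφ Γ) := by
  intro g g' hgg
  have h1 : φφ Γ (g * g'⁻¹) = 1 := by
    rw [map_mul, map_inv, hgg, mul_inv_cancel]
  obtain ⟨w, t, hdec, hphi⟩ := decomp Γ (g * g'⁻¹)
  rw [h1] at hphi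
  have hw : ⇑w = (0 : Fin n → ℤ) := by
    have := congrArg HH.z hphi.symm; simpa using this
  have ht : ⇑t = (0 : NonEdge Γ → ℤ) := by
    have := congrArg HH.t hphi.symm; simpa using this
  have hw0 : w = 0 := Finsupp.ext fun q => congrFun hw q
  have ht0 : t = 0 := Finsupp.ext fun q => congrFun ht q
  have : g * g'⁻¹ = 1 := by
    rw [hdec, hw0, ht0, Finsupp.coe_zero, XX_zero,
      show Multiplicative.ofAdd (0 : NonEdge Γ →₀ ℤ) = 1 from rfl, map_one, mul_one]
  exact mul_inv_eq_one.mp this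

lemma mHom_inj : Function.Injective (mHom Γ) := by
  intro f f' hff
  have h2 := congrArg (φφ Γ) hff
  rw [show f = Multiplicative.ofAdd f.toAdd from rfl,
    show f' = Multiplicative.ofAdd f'.toAdd from rfl, phi_m, phi_m] at h2
  have ht := congrArg HH.t h2
  have : f.toAdd = f'.toAdd := Finsupp.ext fun q => congrFun ht q
  calc f = Multiplicative.ofAdd f.toAdd := rfl
    _ = Multiplicative.ofAdd f'.toAdd := by rw [this]
    _ = f' := rfl

lemma yg_mem_commutator (p : NonEdge Γ) : yg Γ p ∈ commutator (GraphGroup Γ) := by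
  rw [← rel2 Γ p]
  exact Subgroup.commutator_mem_commutator (Subgroup.mem_top _) (Subgroup.mem_top _)

lemma range_eq_commutator : (mHom Γ).range = commutator (GraphGroup Γ) := by
  apply le_antisymm
  · rintro x ⟨f, rfl⟩
    have key : ∀ f0 : NonEdge Γ →₀ ℤ,
        mHom Γ (Multiplicative.ofAdd f0) ∈ commutator (GraphGroup Γ) := by
      intro f0
      induction f0 using Finsupp.induction with
      | zero =>
          rw [show Multiplicative.ofAdd (0 : NonEdge Γ →₀ ℤ) = 1 from rfl, map_one]
          exact one_mem _
      | single_add p b f0 _ _ ih =>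
          rw [ofAdd_add, map_mul, mHom_single]
          exact mul_mem (zpow_mem (yg_mem_commutator Γ p) b) ih
    exact key f.toAdd
  · rw [commutator]
    exact Subgroup.commutator_le.mpr fun g _ h _ => comm_mem Γ g h

lemma MHom_inj : Function.Injective (MHom Γ) := by
  intro s s' hss
  have h2 := congrArg (φφ Γ) hss
  rw [show s = Multiplicative.ofAdd s.toAdd from rfl,
    show s' = Multiplicative.ofAdd s'.toAdd from rfl, phi_M, phi_M] at h2
  have hZ : Zf Γ s.toAdd = Zf Γ s'.toAdd := congrArg HH.z h2
  have hT : Tf Γ s.toAdd = Tf Γ s'.toAdd := congrArg HH.t h2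
  have key : s.toAdd = s'.toAdd := by
    refine Finsupp.ext ?_
    rintro (p | i)
    · exact congrFun hT p
    · have h5 := congrFun hZ i.1
      rw [show Zf Γ s.toAdd i.1 = s.toAdd (Sum.inr ⟨i.1, i.2⟩) from dif_pos i.2,
        show Zf Γ s'.toAdd i.1 = s'.toAdd (Sum.inr ⟨i.1, i.2⟩) from dif_pos i.2] at h5
      exact h5
  calc s = Multiplicative.ofAdd s.toAdd := rfl
    _ = Multiplicative.ofAdd s'.toAdd := by rw [key]
    _ = s' := rfl

lemma Mrange_eq_center : (MHom Γ).range = Subgroup.center (GraphGroup Γ) := by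
  apply le_antisymm
  · rintro x ⟨s, rfl⟩
    exact MHom_mem_center Γ s
  · intro g hg
    obtain ⟨w, t, hdec, hphi⟩ := decomp Γ g
    have hsupp : ∀ j : Fin n, ¬ (Γ.degree j = n - 1) → w j = 0 := by
      intro j hj
      have hex : ∃ k, k ≠ j ∧ ¬ Γ.Adj j k := by
        by_contra hcon
        push_neg at hcon
        exact hj ((degree_eq_iff Γ j).mpr fun k hk => hcon k hk)
      obtain ⟨k, hkj, hkadj⟩ := hex
      have h3 := congrArg (φφ Γ) ((Subgroup.mem_center_iff.mp hg) (xg Γ k))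
      rw [map_mul, map_mul, phi_x, hphi] at h3
      have h4 := congrArg HH.t h3
      simp only [HH.mul_t, HH.mul_z] at h4
      rcases lt_or_gt_of_ne (fun he => hkj he.symm) with hjk | hjk
      · set p : NonEdge Γ := ⟨(j, k), hjk, hkadj⟩ with hp
        have h5 := congrFun h4 p
        simp only [bb, Pi.add_apply, Pi.zero_apply, zero_add, add_zero] at h5
        rw [Pi.single_eq_same, Pi.single_eq_of_ne hjk.ne] at h5
        simp only [one_mul, mul_zero, zero_mul, mul_one] at h5
        have h6 : w p.1.1 = 0 := by omega
        exact h6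
      · have hkadj' : ¬ Γ.Adj k j := fun h => hkadj h.symm
        set p : NonEdge Γ := ⟨(k, j), hjk, hkadj'⟩ with hp
        have h5 := congrFun h4 p
        simp only [bb, Pi.add_apply, Pi.zero_apply, zero_add, add_zero] at h5
        rw [Pi.single_eq_same, Pi.single_eq_of_ne hjk.ne'] at h5
        simp only [one_mul, mul_zero, zero_mul, mul_one] at h5
        have h6 : w p.1.2 = 0 := by omega
        exact h6
    set s : (NonEdge Γ ⊕ FullDeg Γ) →₀ ℤ :=
      Finsupp.equivFunOnFinite.symm (Sum.elim ⇑t fun i => w i.1) with hs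
    have hsval : ⇑s = Sum.elim ⇑t fun i => w i.1 :=
      Finsupp.equivFunOnFinite.apply_symm_apply _
    refine ⟨Multiplicative.ofAdd s, ?_⟩
    apply phi_inj Γ
    rw [phi_M, hphi]
    ext1
    · funext v
      show Zf Γ s v = w v
      rw [Zf]
      by_cases h : Γ.degree v = n - 1
      · rw [dif_pos h]
        have := congrFun hsval (Sum.inr ⟨v, h⟩)
        rw [this]
        rfl
      · rw [dif_neg h]
        exact (hsupp v h).symm
    · funext q
      show Tf Γ s q = t q
      rw [Tf]
      have := congrFun hsval (Sum.inl q)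
      rw [this]
      rfl

end GGProof

/-- The commutator subgroup `γ₂(G_Γ)` is the internal direct product of the infinite cyclic
subgroups `⟨y_p⟩` (free abelian of rank `N`), and the center `Z(G_Γ)` is the internal direct
product of `γ₂(G_Γ)` with the subgroups `⟨x_i⟩` for the vertices `x_i` of degree `n-1`;
in particular the center is free abelian of rank `N + #{vertices of degree n-1}`.
Both facts are expressed by isomorphisms with free abelian groups carrying the
generators to the `y_p` (resp. the `y_p` and the central `x_i`). -/
theorem commutator_and_center_of_graphGroup
    {n : ℕ} (Γ : SimpleGraph (Fin n)) [DecidableRel Γ.Adj] :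
    (∃ e : Multiplicative (NonEdge Γ →₀ ℤ) ≃* commutator (GraphGroup Γ),
      ∀ p : NonEdge Γ,
        ((e (Multiplicative.ofAdd (Finsupp.single p 1)) : commutator (GraphGroup Γ)) :
          GraphGroup Γ) = yg Γ p) ∧
    (∃ e : Multiplicative ((NonEdge Γ ⊕ {i : Fin n // Γ.degree i = n - 1}) →₀ ℤ) ≃*
        Subgroup.center (GraphGroup Γ),
      (∀ p : NonEdge Γ,
        ((e (Multiplicative.ofAdd (Finsupp.single (Sum.inl p) 1)) :
          Subgroup.center (GraphGroup Γ)) : GraphGroup Γ) = yg Γ p) ∧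
      (∀ i : {i : Fin n // Γ.degree i = n - 1},
        ((e (Multiplicative.ofAdd (Finsupp.single (Sum.inr i) 1)) :
          Subgroup.center (GraphGroup Γ)) : GraphGroup Γ) = xg Γ i.1)) := by
  constructor
  · refine ⟨(MonoidHom.ofInjective (GGProof.mHom_inj Γ)).trans
      (MulEquiv.subgroupCongr (GGProof.range_eq_commutator Γ)), fun p => ?_⟩
    rw [MulEquiv.trans_apply, MulEquiv.subgroupCongr_apply,
      MonoidHom.ofInjective_apply, GGProof.mHom_single, zpow_one]
  · refine ⟨(MonoidHom.ofInjective (GGProof.MHom_inj Γ)).trans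
      (MulEquiv.subgroupCongr (GGProof.Mrange_eq_center Γ)), fun p => ?_, fun i => ?_⟩
    · rw [MulEquiv.trans_apply, MulEquiv.subgroupCongr_apply,
        MonoidHom.ofInjective_apply, GGProof.MHom_single_inl, zpow_one]
    · rw [MulEquiv.trans_apply, MulEquiv.subgroupCongr_apply,
        MonoidHom.ofInjective_apply, GGProof.MHom_single_inr, zpow_one]
end

section
/- Let Γ be a finite undirected simple graph on vertices x_1,…,x_n, fix i_0 ∈ {1,…,n}, an integer z ≠ 0 and integers t_1,…,t_N, and set x := x_{i_0}^z · y_1^{t_1}⋯y_N^{t_N} ∈ G_Γ. Then the centralizer of x in G_Γ equals the set of all elements of the form ∏_{i : i = i_0 or x_{i_0}x_i ∈ E} x_i^{v_i} · ∏_{l=1}^N y_l^{s_l} with v_i, s_l ∈ ℤ; that is, it is the subgroup of G_Γ generated by x_{i_0}, the vertices adjacent to x_{i_0}, and y_1,…,y_N. -/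
open scoped commutatorElement

section Model
variable {n : ℕ}

@[ext] structure HGrp (Γ : SimpleGraph (Fin n)) : Type where
  a : Fin n → ℤ
  b : NonEdge Γ → ℤ

namespace HGrp
variable {Γ : SimpleGraph (Fin n)}

def coc (x y : Fin n → ℤ) : NonEdge Γ → ℤ := fun p => x p.1.2 * y p.1.1

instance : Mul (HGrp Γ) := ⟨fun g h => ⟨g.a + h.a, g.b + h.b + coc g.a h.a⟩⟩
instance : One (HGrp Γ) := ⟨⟨0, 0⟩⟩
instance : Inv (HGrp Γ) := ⟨fun g => ⟨-g.a, coc g.a g.a - g.b⟩⟩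

@[simp] lemma mul_a (g h : HGrp Γ) : (g * h).a = g.a + h.a := rfl
@[simp] lemma mul_b (g h : HGrp Γ) : (g * h).b = g.b + h.b + coc g.a h.a := rfl
@[simp] lemma one_a : (1 : HGrp Γ).a = 0 := rfl
@[simp] lemma one_b : (1 : HGrp Γ).b = 0 := rfl
@[simp] lemma inv_a (g : HGrp Γ) : (g⁻¹).a = -g.a := rfl
@[simp] lemma inv_b (g : HGrp Γ) : (g⁻¹).b = coc g.a g.a - g.b := rfl

instance : Group (HGrp Γ) where
  mul_assoc g h k := by
    ext p
    · simp [coc]; ring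
    · simp [coc]; ring
  one_mul g := by ext p <;> simp [coc]
  mul_one g := by ext p <;> simp [coc]
  inv_mul_cancel g := by
    ext p
    · simp
    · simp [coc]

lemma commutator_eq (g h : HGrp Γ) :
    ⁅g, h⁆ = ⟨0, coc g.a h.a - coc h.a g.a⟩ := by
  ext p
  · simp [commutatorElement_def]
  · simp [commutatorElement_def, coc]; ring

end HGrp

variable (Γ : SimpleGraph (Fin n))

/-- images of the generators in the model group -/
def hgens : GraphGens Γ → HGrp Γ
  | .inl i => ⟨Pi.single i 1, 0⟩
  | .inr p => ⟨0, Pi.single p 1⟩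

variable {Γ}

lemma coc_single_adj {i j : Fin n} (h : Γ.Adj i j) (q : NonEdge Γ) :
    (HGrp.coc (Pi.single j 1) (Pi.single i 1) : NonEdge Γ → ℤ) q = 0 := by
  simp only [HGrp.coc, Pi.single_apply]
  rcases eq_or_ne q.1.2 j with h2 | h2
  · rcases eq_or_ne q.1.1 i with h1 | h1
    · exact absurd (show Γ.Adj q.1.1 q.1.2 by rw [h1, h2]; exact h) q.2.2
    · simp [h1]
  · simp [h2]

lemma lift_hgens_rels : ∀ r ∈ GraphRels Γ, FreeGroup.lift (hgens Γ) r = 1 := by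
  intro r hr
  rcases hr with ⟨i, j, hadj, rfl⟩ | ⟨p, rfl⟩ | ⟨l, p, rfl⟩
  · rw [map_commutatorElement, FreeGroup.lift_apply_of, FreeGroup.lift_apply_of]
    rw [show hgens Γ (Sum.inl j) = ⟨Pi.single j 1, 0⟩ from rfl,
      show hgens Γ (Sum.inl i) = ⟨Pi.single i 1, 0⟩ from rfl, HGrp.commutator_eq]
    ext q
    · simp
    · simp only [HGrp.one_b, Pi.sub_apply, Pi.zero_apply]
      rw [coc_single_adj hadj, coc_single_adj hadj.symm, sub_zero]
  · rw [map_mul, map_inv, map_commutatorElement, FreeGroup.lift_apply_of, FreeGroup.lift_apply_of,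
      FreeGroup.lift_apply_of, mul_inv_eq_one]
    rw [show hgens Γ (Sum.inl p.1.2) = ⟨Pi.single p.1.2 1, 0⟩ from rfl,
      show hgens Γ (Sum.inl p.1.1) = ⟨Pi.single p.1.1 1, 0⟩ from rfl,
      show hgens Γ (Sum.inr p) = ⟨0, Pi.single p 1⟩ from rfl, HGrp.commutator_eq]
    ext q
    · simp
    · have hB : (HGrp.coc (Pi.single p.1.1 1) (Pi.single p.1.2 1) : NonEdge Γ → ℤ) q = 0 := by
        simp only [HGrp.coc, Pi.single_apply]
        rcases eq_or_ne q.1.2 p.1.1 with h2 | h2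
        · rcases eq_or_ne q.1.1 p.1.2 with h1 | h1
          · have hlt := q.2.1
            rw [h1, h2] at hlt
            exact absurd hlt (not_lt_of_gt p.2.1)
          · simp [h1]
        · simp [h2]
      have hA : (HGrp.coc (Pi.single p.1.2 1) (Pi.single p.1.1 1) : NonEdge Γ → ℤ) q
          = if q = p then 1 else 0 := by
        simp only [HGrp.coc, Pi.single_apply]
        by_cases h : q = p
        · subst h; simp
        · rw [if_neg h]
          rcases eq_or_ne q.1.2 p.1.2 with h2 | h2
          · rcases eq_or_ne q.1.1 p.1.1 with h1 | h1
            · exact absurd (Subtype.ext (Prod.ext h1 h2)) h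
            · simp [h1]
          · simp [h2]
      have : ((HGrp.coc (Pi.single p.1.2 1) (Pi.single p.1.1 1)
          - HGrp.coc (Pi.single p.1.1 1) (Pi.single p.1.2 1) : NonEdge Γ → ℤ)) q
          = (Pi.single p 1 : NonEdge Γ → ℤ) q := by
        rw [Pi.sub_apply, hA, hB, Pi.single_apply, sub_zero]
      exact this
  · rw [map_commutatorElement, FreeGroup.lift_apply_of, FreeGroup.lift_apply_of]
    rw [show hgens Γ (Sum.inl l) = ⟨Pi.single l 1, 0⟩ from rfl,
      show hgens Γ (Sum.inr p) = ⟨0, Pi.single p 1⟩ from rfl, HGrp.commutator_eq]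
    ext q <;> simp [HGrp.coc]

variable (Γ) in
/-- the homomorphism from the graph group to the model group -/
def φh : GraphGroup Γ →* HGrp Γ := PresentedGroup.toGroup lift_hgens_rels

@[simp] lemma φh_xg (i : Fin n) : φh Γ (xg Γ i) = ⟨Pi.single i 1, 0⟩ :=
  PresentedGroup.toGroup.of _

@[simp] lemma φh_yg (p : NonEdge Γ) : φh Γ (yg Γ p) = ⟨0, Pi.single p 1⟩ :=
  PresentedGroup.toGroup.of _

end Model

section GroupTheory
variable {n : ℕ} {Γ : SimpleGraph (Fin n)}

lemma rel_eq_one {r : FreeGroup (GraphGens Γ)} (hr : r ∈ GraphRels Γ) :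
    PresentedGroup.mk (GraphRels Γ) r = 1 :=
  (QuotientGroup.eq_one_iff r).mpr (Subgroup.subset_normalClosure hr)

lemma xg_commute_of_adj {i j : Fin n} (h : Γ.Adj i j) :
    Commute (xg Γ j) (xg Γ i) := by
  have := rel_eq_one (Γ := Γ) (Or.inl ⟨i, j, h, rfl⟩)
  rw [map_commutatorElement] at this
  exact commutatorElement_eq_one_iff_commute.mp this

lemma yg_eq_commutator (p : NonEdge Γ) :
    yg Γ p = ⁅xg Γ p.1.2, xg Γ p.1.1⁆ := by
  have := rel_eq_one (Γ := Γ) (Or.inr (Or.inl ⟨p, rfl⟩))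
  rw [map_mul, map_inv, map_commutatorElement, mul_inv_eq_one] at this
  exact this.symm

lemma xg_commute_yg (l : Fin n) (p : NonEdge Γ) :
    Commute (xg Γ l) (yg Γ p) := by
  have := rel_eq_one (Γ := Γ) (Or.inr (Or.inr ⟨l, p, rfl⟩))
  rw [map_commutatorElement] at this
  exact commutatorElement_eq_one_iff_commute.mp this

lemma yg_mem_center (p : NonEdge Γ) : yg Γ p ∈ Subgroup.center (GraphGroup Γ) := by
  rw [Subgroup.mem_center_iff]
  intro g
  have hg : g ∈ Subgroup.centralizer {yg Γ p} := by
    refine PresentedGroup.generated_by _ _ (fun j => ?_) g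
    rw [Subgroup.mem_centralizer_iff]
    rintro h rfl
    cases j with
    | inl l => exact (xg_commute_yg l p).symm.eq
    | inr q =>
      show Commute (yg Γ p) (yg Γ q)
      rw [yg_eq_commutator q, commutatorElement_def]
      exact ((((xg_commute_yg q.1.2 p).symm.mul_right
        (xg_commute_yg q.1.1 p).symm).mul_right
        (xg_commute_yg q.1.2 p).symm.inv_right).mul_right
        (xg_commute_yg q.1.1 p).symm.inv_right)
  exact (Subgroup.mem_centralizer_iff.mp hg _ rfl).symm

lemma closure_yg_le_center :
    Subgroup.closure (Set.range (yg Γ)) ≤ Subgroup.center (GraphGroup Γ) := by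
  rw [Subgroup.closure_le]
  rintro _ ⟨p, rfl⟩
  exact yg_mem_center p

lemma commutator_mem_closure_yg (g h : GraphGroup Γ) :
    ⁅g, h⁆ ∈ Subgroup.closure (Set.range (yg Γ)) := by
  set Z := Subgroup.closure (Set.range (yg Γ)) with hZ
  haveI hZn : Z.Normal := by
    constructor
    intro z hz g
    have hc := Subgroup.mem_center_iff.mp (closure_yg_le_center hz) g
    rw [hc, mul_inv_cancel_right]
    exact hz
  set π' := QuotientGroup.mk' Z with hπ'
  have hxx : ∀ i j : Fin n, ⁅xg Γ j, xg Γ i⁆ ∈ Z := by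
    intro i j
    rcases lt_trichotomy i j with hlt | rfl | hlt
    · by_cases ha : Γ.Adj i j
      · rw [commutatorElement_eq_one_iff_commute.mpr (xg_commute_of_adj ha)]
        exact one_mem Z
      · rw [← yg_eq_commutator ⟨(i, j), hlt, ha⟩]
        exact Subgroup.subset_closure ⟨_, rfl⟩
    · rw [commutatorElement_self]; exact one_mem Z
    · by_cases ha : Γ.Adj j i
      · rw [commutatorElement_eq_one_iff_commute.mpr (xg_commute_of_adj ha).symm]
        exact one_mem Z
      · rw [← commutatorElement_inv, ← yg_eq_commutator ⟨(j, i), hlt, ha⟩]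
        exact inv_mem (Subgroup.subset_closure ⟨_, rfl⟩)
    -- note p.1.2 = i, p.1.1 = j in the last case
  have hgen : ∀ (s t : GraphGens Γ),
      Commute (π' (PresentedGroup.of s)) (π' (PresentedGroup.of t)) := by
    intro s t
    rw [← commutatorElement_eq_one_iff_commute, ← map_commutatorElement,
      ← MonoidHom.mem_ker, QuotientGroup.ker_mk']
    cases s with
    | inl i =>
      cases t with
      | inl j => exact hxx j i
      | inr q =>
        show ⁅xg Γ i, yg Γ q⁆ ∈ Z
        rw [commutatorElement_eq_one_iff_commute.mpr (xg_commute_yg i q)]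
        exact one_mem Z
    | inr p =>
      have : Commute (yg Γ p) (PresentedGroup.of t) :=
        (Subgroup.mem_center_iff.mp (yg_mem_center p) _).symm
      show ⁅yg Γ p, PresentedGroup.of t⁆ ∈ Z
      rw [commutatorElement_eq_one_iff_commute.mpr this]
      exact one_mem Z
  have step1 : ∀ (h : GraphGroup Γ) (s : GraphGens Γ),
      Commute (π' (PresentedGroup.of s)) (π' h) := by
    intro h s
    have hmem : h ∈ (Subgroup.centralizer {π' (PresentedGroup.of s)}).comap π' := by
      refine PresentedGroup.generated_by _ _ (fun j => ?_) h
      rw [Subgroup.mem_comap, Subgroup.mem_centralizer_iff]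
      rintro u rfl
      exact (hgen s j).eq
    rw [Subgroup.mem_comap, Subgroup.mem_centralizer_iff] at hmem
    exact hmem _ rfl
  have step2 : Commute (π' g) (π' h) := by
    have hmem : g ∈ (Subgroup.centralizer {π' h}).comap π' := by
      refine PresentedGroup.generated_by _ _ (fun j => ?_) g
      rw [Subgroup.mem_comap, Subgroup.mem_centralizer_iff]
      rintro u rfl
      exact (step1 h j).symm.eq
    rw [Subgroup.mem_comap, Subgroup.mem_centralizer_iff] at hmem
    exact (hmem _ rfl).symm
  have hone : π' ⁅g, h⁆ = 1 := by
    rw [map_commutatorElement]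
    exact commutatorElement_eq_one_iff_commute.mpr step2
  have := hone
  rwa [← QuotientGroup.ker_mk' Z, MonoidHom.mem_ker]

end GroupTheory

section Quot
variable {n : ℕ}

/-- The target subgroup. -/
def Kgp (Γ : SimpleGraph (Fin n)) (i₀ : Fin n) : Subgroup (GraphGroup Γ) :=
  Subgroup.closure
    (({xg Γ i₀} ∪ {g | ∃ i, Γ.Adj i₀ i ∧ g = xg Γ i}) ∪ Set.range (yg Γ))

variable {Γ : SimpleGraph (Fin n)} {i₀ : Fin n}

lemma closure_yg_le_Kgp :
    Subgroup.closure (Set.range (yg Γ)) ≤ Kgp Γ i₀ :=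
  Subgroup.closure_mono Set.subset_union_right

instance Kgp.normal : (Kgp Γ i₀).Normal := by
  constructor
  intro k hk g
  have h1 : ⁅g, k⁆ ∈ Kgp Γ i₀ := closure_yg_le_Kgp (commutator_mem_closure_yg g k)
  have h2 : g * k * g⁻¹ = ⁅g, k⁆ * k := by group
  rw [h2]
  exact mul_mem h1 hk

/-- The quotient by the target subgroup. -/
def Qgp (Γ : SimpleGraph (Fin n)) (i₀ : Fin n) : Type := GraphGroup Γ ⧸ Kgp Γ i₀

lemma quot_Kgp_comm (a b : GraphGroup Γ ⧸ Kgp Γ i₀) : a * b = b * a := by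
  obtain ⟨g, rfl⟩ := QuotientGroup.mk'_surjective (Kgp Γ i₀) a
  obtain ⟨h, rfl⟩ := QuotientGroup.mk'_surjective (Kgp Γ i₀) b
  rw [← map_mul, ← map_mul]
  apply (QuotientGroup.eq (s := Kgp Γ i₀)).mpr
  have := closure_yg_le_Kgp (Γ := Γ) (i₀ := i₀) (commutator_mem_closure_yg h⁻¹ g⁻¹)
  rw [commutatorElement_def, inv_inv, inv_inv] at this
  convert this using 1
  group

instance : CommGroup (Qgp Γ i₀) :=
  @CommGroup.mk (Qgp Γ i₀) (inferInstanceAs (Group (GraphGroup Γ ⧸ Kgp Γ i₀)))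
    quot_Kgp_comm

/-- projection to the quotient -/
def πK (Γ : SimpleGraph (Fin n)) (i₀ : Fin n) : GraphGroup Γ →* Qgp Γ i₀ :=
  QuotientGroup.mk' (Kgp Γ i₀)

/-- first coordinate of the model group, as a hom -/
def fstH (Γ : SimpleGraph (Fin n)) : HGrp Γ →* Multiplicative (Fin n → ℤ) where
  toFun g := Multiplicative.ofAdd g.a
  map_one' := rfl
  map_mul' _ _ := rfl

/-- exponents to products of generators mod `Kgp` -/
def θh (Γ : SimpleGraph (Fin n)) (i₀ : Fin n) : Multiplicative (Fin n → ℤ) →* Qgp Γ i₀ where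
  toFun v := ∏ j : Fin n, (πK Γ i₀ (xg Γ j)) ^ (Multiplicative.toAdd v j)
  map_one' := by simp
  map_mul' u v := by
    have h : ∀ j ∈ Finset.univ, (πK Γ i₀ (xg Γ j)) ^ (Multiplicative.toAdd (u * v) j)
        = (πK Γ i₀ (xg Γ j)) ^ (Multiplicative.toAdd u j)
          * (πK Γ i₀ (xg Γ j)) ^ (Multiplicative.toAdd v j) := by
      intro j _
      rw [← zpow_add]
      rfl
    rw [Finset.prod_congr rfl h, Finset.prod_mul_distrib]

lemma xg_mem_Kgp {j : Fin n} (hj : j = i₀ ∨ Γ.Adj i₀ j) : xg Γ j ∈ Kgp Γ i₀ := by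
  apply Subgroup.subset_closure
  rcases hj with rfl | hj
  · exact Or.inl (Or.inl rfl)
  · exact Or.inl (Or.inr ⟨j, hj, rfl⟩)

lemma yg_mem_Kgp (p : NonEdge Γ) : yg Γ p ∈ Kgp Γ i₀ :=
  Subgroup.subset_closure (Or.inr ⟨p, rfl⟩)

lemma πK_eq : πK Γ i₀ = (θh Γ i₀).comp ((fstH Γ).comp (φh Γ)) := by
  apply PresentedGroup.ext
  intro s
  cases s with
  | inl i =>
    rw [MonoidHom.comp_apply, MonoidHom.comp_apply]
    rw [show (PresentedGroup.of (Sum.inl i) : GraphGroup Γ) = xg Γ i from rfl, φh_xg]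
    show πK Γ i₀ (xg Γ i)
      = ∏ j : Fin n, (πK Γ i₀ (xg Γ j)) ^ ((Pi.single i 1 : Fin n → ℤ) j)
    rw [Fintype.prod_eq_single i (fun j hj => by
      rw [Pi.single_eq_of_ne hj, zpow_zero])]
    rw [Pi.single_eq_same, zpow_one]
  | inr p =>
    rw [MonoidHom.comp_apply, MonoidHom.comp_apply]
    rw [show (PresentedGroup.of (Sum.inr p) : GraphGroup Γ) = yg Γ p from rfl, φh_yg]
    have h1 : πK Γ i₀ (yg Γ p) = 1 :=
      (QuotientGroup.eq_one_iff _).mpr (yg_mem_Kgp p)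
    have h2 : fstH Γ (⟨0, Pi.single p 1⟩ : HGrp Γ) = 1 := rfl
    rw [h1, h2, map_one]

end Quot

/-- For `x = x_{i₀}^z · w` with `z ≠ 0` and `w` a product of powers of the `y_l`,
the centralizer of `x` in `G_Γ` is the subgroup generated by `x_{i₀}`, the vertices
adjacent to `x_{i₀}` and `y_1, …, y_N`. -/
theorem centralizer_of_vertex_power_mul_central
    {n : ℕ} (Γ : SimpleGraph (Fin n)) (i₀ : Fin n) (z : ℤ) (hz : z ≠ 0)
    (w : GraphGroup Γ) (hw : w ∈ Subgroup.closure (Set.range (yg Γ))) :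
    Subgroup.centralizer {xg Γ i₀ ^ z * w} =
      Subgroup.closure
        (({xg Γ i₀} ∪ {g | ∃ i, Γ.Adj i₀ i ∧ g = xg Γ i}) ∪ Set.range (yg Γ)) := by
  have hwc : ∀ u : GraphGroup Γ, Commute u w := fun u =>
    Subgroup.mem_center_iff.mp (closure_yg_le_center hw) u
  have hpow : ∀ (u : HGrp Γ) (m : ℤ), (u ^ m).a = m • u.a := by
    intro u m
    have h1 : fstH Γ (u ^ m) = (fstH Γ u) ^ m := map_zpow _ _ _
    have h2 := congrArg Multiplicative.toAdd h1
    simpa [fstH] using h2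
  apply le_antisymm
  · intro g hg
    have hcomm : (xg Γ i₀ ^ z * w) * g = g * (xg Γ i₀ ^ z * w) :=
      Subgroup.mem_centralizer_iff.mp hg _ rfl
    set X := φh Γ (xg Γ i₀ ^ z * w) with hX
    set G := φh Γ g with hG
    have hwa : (φh Γ w).a = 0 := by
      have hle : Subgroup.closure (Set.range (yg Γ)) ≤ ((fstH Γ).comp (φh Γ)).ker := by
        rw [Subgroup.closure_le]
        rintro _ ⟨p, rfl⟩
        have : fstH Γ (φh Γ (yg Γ p)) = 1 := by rw [φh_yg]; rfl
        simpa [MonoidHom.mem_ker] using this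
      have h1 : fstH Γ (φh Γ w) = 1 := MonoidHom.mem_ker.mp (hle hw)
      have h2 := congrArg Multiplicative.toAdd h1
      simpa [fstH] using h2
    have hXa : X.a = z • Pi.single i₀ 1 := by
      rw [hX, map_mul, HGrp.mul_a, hwa, add_zero, map_zpow, hpow, φh_xg]
    have hXaj : ∀ j : Fin n, j ≠ i₀ → X.a j = 0 := by
      intro j hj
      rw [hXa, Pi.smul_apply, Pi.single_eq_of_ne hj, smul_zero]
    have hXai : X.a i₀ = z := by
      rw [hXa, Pi.smul_apply, Pi.single_eq_same, smul_eq_mul, mul_one]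
    have h2 : X * G = G * X := by rw [hX, hG, ← map_mul, ← map_mul, hcomm]
    have hb := congrArg HGrp.b h2
    rw [HGrp.mul_b, HGrp.mul_b] at hb
    have hkey : ∀ j : Fin n, j ≠ i₀ → ¬ Γ.Adj i₀ j → G.a j = 0 := by
      intro j hne hnadj
      rcases lt_or_gt_of_ne hne with hlt | hlt
      · -- j < i₀
        have hna : ¬ Γ.Adj j i₀ := fun h => hnadj h.symm
        set q : NonEdge Γ := ⟨(j, i₀), hlt, hna⟩ with hq
        have he := congrFun hb q
        simp only [Pi.add_apply] at he
        have hcq : HGrp.coc X.a G.a q = HGrp.coc G.a X.a q := by linarith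
        have h3 : X.a i₀ * G.a j = G.a i₀ * X.a j := hcq
        rw [hXai, hXaj j hne, mul_zero] at h3
        rcases mul_eq_zero.mp h3 with h | h
        · exact absurd h hz
        · exact h
      · -- i₀ < j
        set q : NonEdge Γ := ⟨(i₀, j), hlt, hnadj⟩ with hq
        have he := congrFun hb q
        simp only [Pi.add_apply] at he
        have hcq : HGrp.coc X.a G.a q = HGrp.coc G.a X.a q := by linarith
        have h3 : X.a j * G.a i₀ = G.a j * X.a i₀ := hcq
        rw [hXai, hXaj j hne, zero_mul] at h3
        rcases mul_eq_zero.mp h3.symm with h | h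
        · exact h
        · exact absurd h hz
    have hπ : πK Γ i₀ g = 1 := by
      have h3 : πK Γ i₀ g = θh Γ i₀ ((fstH Γ) (φh Γ g)) := by rw [πK_eq]; rfl
      rw [h3]
      show (∏ j : Fin n, (πK Γ i₀ (xg Γ j)) ^ (G.a j)) = 1
      apply Finset.prod_eq_one
      intro j _
      by_cases hj : G.a j = 0
      · rw [hj, zpow_zero]
      · have hmem : j = i₀ ∨ Γ.Adj i₀ j := by
          by_contra hcon
          push_neg at hcon
          exact hj (hkey j hcon.1 hcon.2)
        have hone : πK Γ i₀ (xg Γ j) = 1 :=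
          (QuotientGroup.eq_one_iff _).mpr (xg_mem_Kgp hmem)
        rw [hone, one_zpow]
    have hgm : g ∈ Kgp Γ i₀ := (QuotientGroup.eq_one_iff g).mp hπ
    exact hgm
  · rw [Subgroup.closure_le]
    rintro s hs
    rw [SetLike.mem_coe, Subgroup.mem_centralizer_iff]
    intro u hu
    rw [Set.mem_singleton_iff] at hu
    subst hu
    rcases hs with (rfl | ⟨i, hadj, rfl⟩) | ⟨p, rfl⟩
    · exact (((Commute.refl (xg Γ i₀)).zpow_right z).mul_right (hwc _)).symm.eq
    · exact (((xg_commute_of_adj hadj).zpow_right z).mul_right (hwc _)).symm.eq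
    · exact Subgroup.mem_center_iff.mp (yg_mem_center p) _
end

section
/- Let Γ be a finite undirected simple graph on n vertices whose maximal vertex degree equals n−2 and such that exactly one vertex has degree n−2. Then G_Γ has the R_∞-property, i.e. R(φ) = ∞ for every automorphism φ of G_Γ. -/
open scoped commutatorElement

namespace GGAux

variable {n : ℕ} (Γ : SimpleGraph (Fin n))

def om (a b : Fin n → ℤ) : NonEdge Γ → ℤ := fun p => a p.1.2 * b p.1.1

@[ext] structure HH (Γ : SimpleGraph (Fin n)) where
  a : Fin n → ℤ
  s : NonEdge Γ → ℤ

namespace HH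

instance : Mul (HH Γ) := ⟨fun g h => ⟨g.a + h.a, g.s + h.s + om Γ g.a h.a⟩⟩
instance : One (HH Γ) := ⟨⟨0, 0⟩⟩
instance : Inv (HH Γ) := ⟨fun g => ⟨-g.a, -g.s + om Γ g.a g.a⟩⟩

variable {Γ}

@[simp] theorem mul_a (g h : HH Γ) : (g * h).a = g.a + h.a := rfl
@[simp] theorem mul_s (g h : HH Γ) : (g * h).s = g.s + h.s + om Γ g.a h.a := rfl
@[simp] theorem one_a : (1 : HH Γ).a = 0 := rfl
@[simp] theorem one_s : (1 : HH Γ).s = 0 := rfl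
@[simp] theorem inv_a (g : HH Γ) : (g⁻¹).a = -g.a := rfl
@[simp] theorem inv_s (g : HH Γ) : (g⁻¹).s = -g.s + om Γ g.a g.a := rfl

instance : Group (HH Γ) where
  mul_assoc g h k := by ext p <;> simp [om] <;> ring
  one_mul g := by ext p <;> simp [om]
  mul_one g := by ext p <;> simp [om]
  inv_mul_cancel g := by ext p <;> simp [om]

theorem commutator_hh (g h : HH Γ) :
    ⁅g, h⁆ = ⟨0, om Γ g.a h.a - om Γ h.a g.a⟩ := by
  rw [commutatorElement_def]
  ext p <;> simp [om] <;> ring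

end HH

variable {Γ}
variable [DecidableRel Γ.Adj]

abbrev ee (i : Fin n) : Fin n → ℤ := Pi.single i 1
abbrev ey (p : NonEdge Γ) : NonEdge Γ → ℤ := Pi.single p 1

theorem ee_apply (i k : Fin n) : ee i k = if k = i then 1 else 0 := Pi.single_apply _ _ _
theorem ey_apply (p q : NonEdge Γ) : ey p q = if q = p then 1 else 0 := Pi.single_apply _ _ _

/-- images of the generators in the model group. -/
def gen : GraphGens Γ → HH Γ
  | Sum.inl i => ⟨ee i, 0⟩
  | Sum.inr p => ⟨0, ey p⟩

theorem gen_rels : ∀ r ∈ GraphRels Γ, FreeGroup.lift (gen (Γ := Γ)) r = 1 := by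
  rintro r (⟨i, j, hadj, rfl⟩ | ⟨p, rfl⟩ | ⟨l, p, rfl⟩)
  · rw [map_commutatorElement]
    simp only [FreeGroup.lift_apply_of, gen, HH.commutator_hh]
    ext q
    · simp
    · simp only [om, HH.one_s, Pi.zero_apply, Pi.sub_apply]
      have h1 : ee j q.1.2 * ee i q.1.1 = 0 := by
        rcases eq_or_ne q.1.2 j with hj | hj
        · rcases eq_or_ne q.1.1 i with hi | hi
          · exact absurd (hi ▸ hj ▸ hadj) q.2.2
          · simp [ee_apply, hi]
        · simp [ee_apply, hj]
      have h2 : ee i q.1.2 * ee j q.1.1 = 0 := by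
        rcases eq_or_ne q.1.2 i with hj | hj
        · rcases eq_or_ne q.1.1 j with hi | hi
          · exact absurd (hi ▸ hj ▸ hadj.symm) q.2.2
          · simp [ee_apply, hi]
        · simp [ee_apply, hj]
      rw [h1, h2]; ring
  · rw [map_mul, map_inv, map_commutatorElement]
    simp only [FreeGroup.lift_apply_of, gen, HH.commutator_hh]
    have key : om Γ (ee p.1.2) (ee p.1.1) - om Γ (ee p.1.1) (ee p.1.2) = ey p := by
      funext q
      simp only [om, Pi.sub_apply]
      have h2 : ee p.1.1 q.1.2 * ee p.1.2 q.1.1 = 0 := by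
        rcases eq_or_ne q.1.2 p.1.1 with hj | hj
        · rcases eq_or_ne q.1.1 p.1.2 with hi | hi
          · exfalso
            have hq := q.2.1
            have hp := p.2.1
            rw [hj, hi] at hq
            exact absurd hp (not_lt.mpr hq.le)
          · simp [ee_apply, hi]
        · simp [ee_apply, hj]
      rw [h2, sub_zero, ey_apply]
      rcases eq_or_ne q p with rfl | hq
      · simp [ee_apply]
      · have hne : ¬(q.1.2 = p.1.2 ∧ q.1.1 = p.1.1) := fun ⟨ha, hb⟩ =>
          hq (Subtype.ext (Prod.ext hb ha))
        rcases not_and_or.mp hne with h | h <;> simp [ee_apply, h, hq]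
    rw [key]
    ext q <;> simp [om]
  · rw [map_commutatorElement]
    simp only [FreeGroup.lift_apply_of, gen, HH.commutator_hh]
    ext q <;> simp [om]

/-- the homomorphism to the model group -/
def rho : GraphGroup Γ →* HH Γ := PresentedGroup.toGroup gen_rels

@[simp] theorem rho_x (i : Fin n) : rho (xg Γ i) = ⟨ee i, 0⟩ :=
  PresentedGroup.toGroup.of _
@[simp] theorem rho_y (p : NonEdge Γ) : rho (yg Γ p) = ⟨0, ey p⟩ :=
  PresentedGroup.toGroup.of _


/-! ### Relations in the graph group -/

theorem rel_one {r : FreeGroup (GraphGens Γ)} (h : r ∈ GraphRels Γ) :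
    PresentedGroup.mk (GraphRels Γ) r = 1 := by
  exact PresentedGroup.one_of_mem h

theorem xg_def (i : Fin n) : xg Γ i = PresentedGroup.mk (GraphRels Γ) (FreeGroup.of (Sum.inl i)) := rfl
theorem yg_def (p : NonEdge Γ) :
    yg Γ p = PresentedGroup.mk (GraphRels Γ) (FreeGroup.of (Sum.inr p)) := rfl

theorem comm_xx_adj {i j : Fin n} (h : Γ.Adj i j) : ⁅xg Γ j, xg Γ i⁆ = 1 := by
  have h2 := rel_one (Γ := Γ) (Or.inl ⟨i, j, h, rfl⟩)
  rwa [map_commutatorElement] at h2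

theorem comm_xx_nonedge (p : NonEdge Γ) : ⁅xg Γ p.1.2, xg Γ p.1.1⁆ = yg Γ p := by
  have h2 := rel_one (Γ := Γ) (Or.inr (Or.inl ⟨p, rfl⟩))
  rw [map_mul, map_inv, map_commutatorElement] at h2
  rw [← xg_def, ← xg_def, ← yg_def] at h2
  exact eq_of_mul_inv_eq_one h2

theorem comm_xy (l : Fin n) (p : NonEdge Γ) : ⁅xg Γ l, yg Γ p⁆ = 1 := by
  have h2 := rel_one (Γ := Γ) (Or.inr (Or.inr ⟨l, p, rfl⟩))
  rwa [map_commutatorElement] at h2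

theorem commute_xy (l : Fin n) (p : NonEdge Γ) : Commute (xg Γ l) (yg Γ p) :=
  commutatorElement_eq_one_iff_commute.mp (comm_xy l p)

theorem yg_mem_center (p : NonEdge Γ) : yg Γ p ∈ Subgroup.center (GraphGroup Γ) := by
  rw [Subgroup.mem_center_iff]
  intro g
  have : g ∈ Subgroup.centralizer {yg Γ p} := by
    refine PresentedGroup.generated_by (GraphRels Γ) _ (fun j => ?_) g
    rw [Subgroup.mem_centralizer_iff]
    rintro y rfl
    rcases j with i | q
    · exact ((commute_xy i p)).symm.eq
    · show yg Γ p * yg Γ q = yg Γ q * yg Γ p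
      have hc : Commute (yg Γ p) (yg Γ q) := by
        rw [← comm_xx_nonedge q, commutatorElement_def]
        have h1 := (commute_xy q.1.2 p).symm
        have h2 := (commute_xy q.1.1 p).symm
        exact h1.mul_right (h2.mul_right (h1.inv_right.mul_right h2.inv_right))
      exact hc.eq
  exact (Subgroup.mem_centralizer_iff.mp this (yg Γ p) rfl).symm

variable (Γ) in
/-- the subgroup generated by the central generators -/
def Zc : Subgroup (GraphGroup Γ) := Subgroup.closure (Set.range (yg Γ))

theorem Zc_le_center : Zc Γ ≤ Subgroup.center (GraphGroup Γ) := by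
  rw [Zc, Subgroup.closure_le]
  rintro y ⟨p, rfl⟩
  exact yg_mem_center p

theorem yg_mem_Zc (p : NonEdge Γ) : yg Γ p ∈ Zc Γ :=
  Subgroup.subset_closure ⟨p, rfl⟩

theorem conj_mem_Zc {z : GraphGroup Γ} (hz : z ∈ Zc Γ) (a : GraphGroup Γ) :
    a * z * a⁻¹ = z := by
  rw [Subgroup.mem_center_iff.mp (Zc_le_center hz) a]
  group

/-- the subgroup of `g` with `⁅g, h⁆ ∈ Zc` -/
def Sleft (h : GraphGroup Γ) : Subgroup (GraphGroup Γ) where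
  carrier := {g | ⁅g, h⁆ ∈ Zc Γ}
  one_mem' := by
    simp only [Set.mem_setOf_eq, commutatorElement_one_left]
    exact one_mem _
  mul_mem' := by
    intro a b ha hb
    have key : ⁅a * b, h⁆ = a * ⁅b, h⁆ * a⁻¹ * ⁅a, h⁆ := by group
    simp only [Set.mem_setOf_eq] at *
    rw [key, conj_mem_Zc hb a]
    exact mul_mem hb ha
  inv_mem' := by
    intro a ha
    have key : ⁅a⁻¹, h⁆ = a⁻¹ * ⁅a, h⁆⁻¹ * a := by group
    simp only [Set.mem_setOf_eq] at *
    have h2 : a⁻¹ * ⁅a, h⁆⁻¹ * a = ⁅a, h⁆⁻¹ := by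
      have h3 := conj_mem_Zc (inv_mem ha) a⁻¹
      rwa [inv_inv] at h3
    rw [key, h2]
    exact inv_mem ha

/-- the subgroup of `h` with `⁅g, h⁆ ∈ Zc` -/
def Sright (g : GraphGroup Γ) : Subgroup (GraphGroup Γ) where
  carrier := {h | ⁅g, h⁆ ∈ Zc Γ}
  one_mem' := by
    simp only [Set.mem_setOf_eq, commutatorElement_one_right]
    exact one_mem _
  mul_mem' := by
    intro a b ha hb
    have key : ⁅g, a * b⁆ = ⁅g, a⁆ * (a * ⁅g, b⁆ * a⁻¹) := by group
    simp only [Set.mem_setOf_eq] at *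
    rw [key, conj_mem_Zc hb a]
    exact mul_mem ha hb
  inv_mem' := by
    intro a ha
    have key : ⁅g, a⁻¹⁆ = a⁻¹ * ⁅g, a⁆⁻¹ * a := by group
    simp only [Set.mem_setOf_eq] at *
    have h2 : a⁻¹ * ⁅g, a⁆⁻¹ * a = ⁅g, a⁆⁻¹ := by
      have h3 := conj_mem_Zc (inv_mem ha) a⁻¹
      rwa [inv_inv] at h3
    rw [key, h2]
    exact inv_mem ha

theorem comm_gen_gen_mem (x x' : GraphGens Γ) :
    ⁅(PresentedGroup.of x : GraphGroup Γ), PresentedGroup.of x'⁆ ∈ Zc Γ := by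
  have hyy : ∀ (p : NonEdge Γ) (g : GraphGroup Γ), Commute g (yg Γ p) := by
    intro p g
    exact (Subgroup.mem_center_iff.mp (yg_mem_center p) g)
  have hxx : ∀ i j : Fin n, ⁅xg Γ i, xg Γ j⁆ ∈ Zc Γ := by
    intro i j
    rcases eq_or_ne i j with rfl | hne
    · rw [commutatorElement_self]; exact one_mem _
    · by_cases hadj : Γ.Adj j i
      · rw [comm_xx_adj hadj]; exact one_mem _
      · rcases lt_or_gt_of_ne hne with hlt | hlt
        · have : ⁅xg Γ j, xg Γ i⁆ ∈ Zc Γ := by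
            have hna : ¬ Γ.Adj i j := fun h => hadj h.symm
            exact (comm_xx_nonedge ⟨(i, j), hlt, hna⟩) ▸ yg_mem_Zc _
          rw [← commutatorElement_inv]
          exact inv_mem this
        · exact (comm_xx_nonedge ⟨(j, i), hlt, hadj⟩) ▸ yg_mem_Zc _
  rcases x with i | p <;> rcases x' with i' | p'
  · exact hxx i i'
  · show ⁅xg Γ i, yg Γ p'⁆ ∈ Zc Γ
    rw [comm_xy]; exact one_mem _
  · show ⁅yg Γ p, xg Γ i'⁆ ∈ Zc Γ
    rw [((hyy p (xg Γ i')).symm).commutator_eq]; exact one_mem _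
  · show ⁅yg Γ p, yg Γ p'⁆ ∈ Zc Γ
    rw [(hyy p' (yg Γ p)).commutator_eq]; exact one_mem _

theorem comm_mem_Zc (g h : GraphGroup Γ) : ⁅g, h⁆ ∈ Zc Γ := by
  have step1 : ∀ (x : GraphGens Γ) (g : GraphGroup Γ),
      ⁅g, (PresentedGroup.of x : GraphGroup Γ)⁆ ∈ Zc Γ := fun x g =>
    PresentedGroup.generated_by (GraphRels Γ) (Sleft (PresentedGroup.of x))
      (fun j => comm_gen_gen_mem j x) g
  exact PresentedGroup.generated_by (GraphRels Γ) (Sright g) (fun j => step1 j g) h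

theorem phi_mem_Zc (φ : GraphGroup Γ ≃* GraphGroup Γ) {z : GraphGroup Γ} (hz : z ∈ Zc Γ) :
    φ z ∈ Zc Γ := by
  induction hz using Subgroup.closure_induction with
  | mem y hy =>
      obtain ⟨p, rfl⟩ := hy
      rw [← comm_xx_nonedge p, map_commutatorElement]
      exact comm_mem_Zc _ _
  | one => rw [map_one]; exact one_mem _
  | mul a b ha hb iha ihb => rw [map_mul]; exact mul_mem iha ihb
  | inv a ha iha => rw [map_inv]; exact inv_mem iha


/-! ### coordinates -/

def pia (g : GraphGroup Γ) : Fin n → ℤ := (rho g).a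
def nu (g : GraphGroup Γ) : NonEdge Γ → ℤ := (rho g).s

theorem pia_mul (g h : GraphGroup Γ) : pia (g * h) = pia g + pia h := by
  unfold pia; rw [map_mul]; rfl

theorem pia_one : pia (1 : GraphGroup Γ) = 0 := by unfold pia; rw [map_one]; rfl

theorem pia_inv (g : GraphGroup Γ) : pia g⁻¹ = -pia g := by
  unfold pia; rw [map_inv]; rfl

@[simp] theorem pia_x (i : Fin n) : pia (xg Γ i) = ee i := by
  unfold pia; rw [rho_x]

@[simp] theorem pia_y (p : NonEdge Γ) : pia (yg Γ p) = 0 := by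
  unfold pia; rw [rho_y]

theorem HH.pow_a (g : HH Γ) (m : ℕ) : (g ^ m).a = m • g.a := by
  induction m with
  | zero => rw [pow_zero, zero_smul]; rfl
  | succ k ih => rw [pow_succ, HH.mul_a, ih, add_smul, one_smul]

theorem HH.zpow_a (g : HH Γ) (m : ℤ) : (g ^ m).a = m • g.a := by
  rcases m with m | m
  · rw [Int.ofNat_eq_coe, zpow_natCast, HH.pow_a]; norm_num
  · rw [zpow_negSucc, HH.inv_a, HH.pow_a]
    funext k
    simp [Int.negSucc_eq]
    ring

theorem pia_zpow (g : GraphGroup Γ) (m : ℤ) : pia (g ^ m) = m • pia g := by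
  unfold pia; rw [map_zpow, HH.zpow_a]

theorem pia_mem_Zc {z : GraphGroup Γ} (hz : z ∈ Zc Γ) : pia z = 0 := by
  induction hz using Subgroup.closure_induction with
  | mem y hy => obtain ⟨p, rfl⟩ := hy; exact pia_y p
  | one => exact pia_one
  | mul a b _ _ iha ihb => rw [pia_mul, iha, ihb, add_zero]
  | inv a _ iha => rw [pia_inv, iha, neg_zero]

theorem nu_mul {g : GraphGroup Γ} (h : GraphGroup Γ) (hg : pia g = 0) :
    nu (g * h) = nu g + nu h := by
  unfold nu
  rw [map_mul, HH.mul_s]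
  have : om Γ (rho g).a (rho h).a = 0 := by
    funext q
    show (rho g).a q.1.2 * (rho h).a q.1.1 = 0
    have : (rho g).a = 0 := hg
    rw [this]
    simp
  rw [this, add_zero]

theorem nu_inv {g : GraphGroup Γ} (hg : pia g = 0) : nu g⁻¹ = -nu g := by
  unfold nu
  rw [map_inv, HH.inv_s]
  have : om Γ (rho g).a (rho g).a = 0 := by
    funext q
    show (rho g).a q.1.2 * (rho g).a q.1.1 = 0
    have : (rho g).a = 0 := hg
    rw [this]
    simp
  rw [this, add_zero]

theorem HH.zpow_s_of_a_zero (g : HH Γ) (hg : g.a = 0) (m : ℤ) : (g ^ m).s = m • g.s := by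
  have hpow : ∀ k : ℕ, (g ^ k).s = k • g.s := by
    intro k
    induction k with
    | zero => rw [pow_zero, zero_smul]; rfl
    | succ j ih =>
        rw [pow_succ, HH.mul_s, ih, HH.pow_a, hg, smul_zero]
        have hom0 : om Γ (0 : Fin n → ℤ) (0 : Fin n → ℤ) = 0 := by
          funext q; show (0:ℤ) * _ = 0; ring
        rw [hom0, add_zero, add_smul, one_smul]
  rcases m with m | m
  · rw [Int.ofNat_eq_coe, zpow_natCast, hpow]; norm_num
  · rw [zpow_negSucc, HH.inv_s, hpow, HH.pow_a, hg, smul_zero]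
    have hom0 : om Γ (0 : Fin n → ℤ) (0 : Fin n → ℤ) = 0 := by
      funext q; show (0:ℤ) * _ = 0; ring
    rw [hom0, add_zero]
    funext k
    simp [Int.negSucc_eq]
    ring

theorem nu_y_zpow (q : NonEdge Γ) (m : ℤ) : nu ((yg Γ q) ^ m) = m • Pi.single q (1 : ℤ) := by
  unfold nu
  rw [map_zpow, HH.zpow_s_of_a_zero _ (by rw [rho_y]), rho_y]

theorem pia_y_zpow (q : NonEdge Γ) (m : ℤ) : pia ((yg Γ q) ^ m) = 0 := by
  rw [pia_zpow, pia_y, smul_zero]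

theorem pia_x_zpow (i : Fin n) (m : ℤ) : pia ((xg Γ i) ^ m) = m • ee i := by
  rw [pia_zpow, pia_x]

/-! ### the kernel of `pia` is `Zc` -/

instance : (Zc Γ).Normal := ⟨fun z hz g => by rw [conj_mem_Zc hz g]; exact hz⟩

instance : CommGroup (GraphGroup Γ ⧸ Zc Γ) :=
  { (inferInstance : Group (GraphGroup Γ ⧸ Zc Γ)) with
    mul_comm := by
      intro a b
      induction a using QuotientGroup.induction_on with | H g =>
      induction b using QuotientGroup.induction_on with | H h =>
      show QuotientGroup.mk (g * h) = QuotientGroup.mk (h * g)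
      rw [QuotientGroup.eq]
      have key : (g * h)⁻¹ * (h * g) = ⁅h⁻¹, g⁻¹⁆ := by group
      rw [key]
      exact comm_mem_Zc _ _ }

def fstHom : HH Γ →* Multiplicative (Fin n → ℤ) where
  toFun g := Multiplicative.ofAdd g.a
  map_one' := rfl
  map_mul' g h := rfl

def piaM : GraphGroup Γ →* Multiplicative (Fin n → ℤ) := (fstHom).comp rho

theorem piaM_apply (g : GraphGroup Γ) : piaM g = Multiplicative.ofAdd (pia g) := rfl

variable (Γ) in
noncomputable def sigAdd : (Fin n → ℤ) →+ Additive (GraphGroup Γ ⧸ Zc Γ) :=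
  ∑ i : Fin n, ((zmultiplesHom (Additive (GraphGroup Γ ⧸ Zc Γ)))
      (Additive.ofMul (QuotientGroup.mk (xg Γ i)))).comp (Pi.evalAddMonoidHom (fun _ => ℤ) i)

theorem sigAdd_apply (c : Fin n → ℤ) :
    sigAdd Γ c = ∑ i : Fin n, (c i) • Additive.ofMul (QuotientGroup.mk (s := Zc Γ) (xg Γ i)) := by
  rw [sigAdd, AddMonoidHom.finset_sum_apply]
  rfl

theorem kerpia {g : GraphGroup Γ} (hg : pia g = 0) : g ∈ Zc Γ := by
  have hext : QuotientGroup.mk' (Zc Γ) =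
      ((AddMonoidHom.toMultiplicativeLeft (sigAdd Γ)).comp piaM) := by
    apply PresentedGroup.ext
    intro x
    rcases x with i | p
    · show QuotientGroup.mk (xg Γ i) =
        (AddMonoidHom.toMultiplicativeLeft (sigAdd Γ)) (piaM (xg Γ i))
      rw [piaM_apply, pia_x]
      show QuotientGroup.mk (xg Γ i) = Additive.toMul (sigAdd Γ (ee i))
      rw [sigAdd_apply]
      rw [Finset.sum_eq_single i ?h1 ?h2]
      · rw [ee_apply, if_pos rfl, one_smul]; rfl

      · intro j _ hj
        rw [ee_apply, if_neg hj, zero_smul]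
      · intro h; exact absurd (Finset.mem_univ i) h
    · show QuotientGroup.mk (yg Γ p) =
        (AddMonoidHom.toMultiplicativeLeft (sigAdd Γ)) (piaM (yg Γ p))
      rw [piaM_apply, pia_y]
      show QuotientGroup.mk (yg Γ p) = Additive.toMul (sigAdd Γ 0)
      rw [map_zero]
      show _ = (1 : GraphGroup Γ ⧸ Zc Γ)
      rw [QuotientGroup.eq_one_iff]
      exact yg_mem_Zc p
  have := congrFun (congrArg (fun (f : _ →* GraphGroup Γ ⧸ Zc Γ) => (f : GraphGroup Γ → _)) hext) g
  rw [← QuotientGroup.eq_one_iff g]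
  show QuotientGroup.mk' (Zc Γ) g = 1
  rw [this]
  show Additive.toMul (sigAdd Γ (pia g)) = 1
  rw [hg, map_zero]
  rfl


theorem nu_one : nu (1 : GraphGroup Γ) = 0 := by unfold nu; rw [map_one]; rfl

theorem comm_nu (g h : GraphGroup Γ) :
    nu ⁅g, h⁆ = om Γ (pia g) (pia h) - om Γ (pia h) (pia g) := by
  unfold nu pia
  rw [map_commutatorElement, HH.commutator_hh]

/-! ### the matrices of an automorphism -/

section Phi

variable (φ : GraphGroup Γ ≃* GraphGroup Γ)

def Amat : Matrix (Fin n) (Fin n) ℤ := Matrix.of fun i j => pia (φ (xg Γ j)) i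

def Cmat : Matrix (NonEdge Γ) (NonEdge Γ) ℤ := Matrix.of fun q p => nu (φ (yg Γ p)) q

theorem pia_phi (g : GraphGroup Γ) : pia (φ g) = (Amat φ).mulVec (pia g) := by
  have hext : piaM.comp φ.toMonoidHom =
      (AddMonoidHom.toMultiplicative ((Amat φ).mulVecLin).toAddMonoidHom).comp piaM := by
    apply PresentedGroup.ext
    intro x
    rcases x with j | p
    · show piaM (φ (xg Γ j)) = AddMonoidHom.toMultiplicative ((Amat φ).mulVecLin).toAddMonoidHom
        (piaM (xg Γ j))
      rw [piaM_apply, piaM_apply, pia_x]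
      show Multiplicative.ofAdd (pia (φ (xg Γ j)))
        = Multiplicative.ofAdd ((Amat φ).mulVec (ee j))
      rw [Matrix.mulVec_single]
      congr 1
      funext i
      rw [MulOpposite.op_one, one_smul]
      rfl
    · show piaM (φ (yg Γ p)) = AddMonoidHom.toMultiplicative ((Amat φ).mulVecLin).toAddMonoidHom
        (piaM (yg Γ p))
      rw [piaM_apply, piaM_apply, pia_y]
      show Multiplicative.ofAdd (pia (φ (yg Γ p)))
        = Multiplicative.ofAdd ((Amat φ).mulVec 0)
      rw [Matrix.mulVec_zero, pia_mem_Zc (phi_mem_Zc φ (yg_mem_Zc p))]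
  have h2 := congrArg (fun (f : _ →* Multiplicative (Fin n → ℤ)) => Multiplicative.toAdd (f g)) hext
  exact h2

theorem Amat_symm_mul : Amat φ.symm * Amat φ = 1 := by
  ext i j
  have h1 : (Amat φ.symm).mulVec ((Amat φ).mulVec (ee j)) = ee j := by
    rw [← pia_x (Γ := Γ) j, ← pia_phi φ, ← pia_phi φ.symm]
    rw [MulEquiv.symm_apply_apply]
  rw [Matrix.mulVec_mulVec] at h1
  have h2 := congrFun h1 i
  rw [Matrix.mulVec_single] at h2
  simp only [MulOpposite.op_one, one_smul, Matrix.col_apply] at h2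
  rw [h2, ee_apply, Matrix.one_apply]

theorem Amat_mul_symm : Amat φ * Amat φ.symm = 1 := by
  have := Amat_symm_mul φ.symm
  simp only [MulEquiv.symm_symm] at this
  exact this

theorem star_Amat {i j : Fin n} (h : Γ.Adj i j) (q : NonEdge Γ) :
    Amat φ q.1.2 j * Amat φ q.1.1 i = Amat φ q.1.2 i * Amat φ q.1.1 j := by
  have h1 : ⁅φ (xg Γ j), φ (xg Γ i)⁆ = 1 := by
    rw [← map_commutatorElement, comm_xx_adj h, map_one]
  have h2 := comm_nu (φ (xg Γ j)) (φ (xg Γ i))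
  rw [h1, nu_one] at h2
  have h3 := congrFun h2.symm q
  simp only [Pi.sub_apply, Pi.zero_apply] at h3
  have h4 : om Γ (pia (φ (xg Γ j))) (pia (φ (xg Γ i))) q = Amat φ q.1.2 j * Amat φ q.1.1 i := rfl
  have h5 : om Γ (pia (φ (xg Γ i))) (pia (φ (xg Γ j))) q = Amat φ q.1.2 i * Amat φ q.1.1 j := rfl
  rw [h4, h5] at h3
  linarith

theorem Cmat_eq (q p : NonEdge Γ) :
    Cmat φ q p = Amat φ q.1.2 p.1.2 * Amat φ q.1.1 p.1.1
      - Amat φ q.1.2 p.1.1 * Amat φ q.1.1 p.1.2 := by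
  show nu (φ (yg Γ p)) q = _
  rw [← comm_xx_nonedge p, map_commutatorElement, comm_nu]
  rfl

theorem nu_phi {z : GraphGroup Γ} (hz : z ∈ Zc Γ) : nu (φ z) = (Cmat φ).mulVec (nu z) := by
  induction hz using Subgroup.closure_induction with
  | mem y hy =>
      obtain ⟨p, rfl⟩ := hy
      have hnuy : nu (yg Γ p) = Pi.single p 1 := by unfold nu; rw [rho_y]
      rw [hnuy, Matrix.mulVec_single]
      funext q
      rw [MulOpposite.op_one, one_smul]
      rfl
  | one => rw [map_one, nu_one, Matrix.mulVec_zero]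
  | mul a b ha hb iha ihb =>
      rw [map_mul, nu_mul _ (pia_mem_Zc (phi_mem_Zc φ ha)), iha, ihb,
        nu_mul _ (pia_mem_Zc ha), Matrix.mulVec_add]
  | inv a ha iha =>
      rw [map_inv, nu_inv (pia_mem_Zc (phi_mem_Zc φ ha)), iha,
        nu_inv (pia_mem_Zc ha), Matrix.mulVec_neg]

end Phi

def mkNE {k l : Fin n} (hkl : k ≠ l) (hna : ¬ Γ.Adj k l) : NonEdge Γ :=
  if h : k < l then ⟨(k, l), h, hna⟩
  else ⟨(l, k), (hkl.lt_or_gt.resolve_left h), fun ha => hna ha.symm⟩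

theorem mkNE_cases {k l : Fin n} (hkl : k ≠ l) (hna : ¬ Γ.Adj k l) :
    (mkNE hkl hna).1 = (k, l) ∨ (mkNE hkl hna).1 = (l, k) := by
  unfold mkNE
  split <;> simp

section Core

variable {v w : Fin n} {X X' : Matrix (Fin n) (Fin n) ℤ}

/-- `key1`: the fundamental linear identity -/
theorem key1
    (hG2 : ∀ u, u ≠ v → u ≠ w → Γ.Adj v u)
    (hXX' : X * X' = 1)
    (hstar : ∀ i j, Γ.Adj i j → ∀ q : NonEdge Γ,
      X q.1.2 j * X q.1.1 i = X q.1.2 i * X q.1.1 j)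
    (q0 : NonEdge Γ) (j : Fin n) :
    X q0.1.1 v * (1 : Matrix (Fin n) (Fin n) ℤ) q0.1.2 j
      = X q0.1.2 v * (1 : Matrix (Fin n) (Fin n) ℤ) q0.1.1 j
        + (X q0.1.1 v * X q0.1.2 w - X q0.1.2 v * X q0.1.1 w) * X' w j := by
  set k := q0.1.1 with hk
  set l := q0.1.2 with hl
  have par : ∀ u, u ≠ w → X k v * X l u = X l v * X k u := by
    intro u hu
    rcases eq_or_ne u v with rfl | huv
    · ring
    · have h := hstar v u (hG2 u huv hu) q0
      rw [← hk, ← hl] at h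
      linarith
  have hml : (1 : Matrix (Fin n) (Fin n) ℤ) l j = ∑ u, X l u * X' u j := by
    rw [← hXX', Matrix.mul_apply]
  have hmk : (1 : Matrix (Fin n) (Fin n) ℤ) k j = ∑ u, X k u * X' u j := by
    rw [← hXX', Matrix.mul_apply]
  have hw : (Finset.univ : Finset (Fin n)) = insert w (Finset.univ.erase w) :=
    (Finset.insert_erase (Finset.mem_univ w)).symm
  rw [hml, hmk, Finset.mul_sum, Finset.mul_sum, hw,
    Finset.sum_insert (Finset.notMem_erase w _), Finset.sum_insert (Finset.notMem_erase w _)]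
  have herase : ∑ u ∈ Finset.univ.erase w, X k v * (X l u * X' u j)
      = ∑ u ∈ Finset.univ.erase w, X l v * (X k u * X' u j) := by
    apply Finset.sum_congr rfl
    intro u hu
    have hpar := par u (Finset.ne_of_mem_erase hu)
    linear_combination (X' u j) * hpar
  rw [herase]
  ring

theorem L1'
    (hG2 : ∀ u, u ≠ v → u ≠ w → Γ.Adj v u)
    (hXX' : X * X' = 1)
    (hstar : ∀ i j, Γ.Adj i j → ∀ q : NonEdge Γ,
      X q.1.2 j * X q.1.1 i = X q.1.2 i * X q.1.1 j)
    {k l : Fin n} (hkl : k ≠ l) (hna : ¬ Γ.Adj k l)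
    (hXk : ¬ (X k v = 0 ∧ X l v = 0)) :
    ∀ j, j ≠ k → j ≠ l → X' w j = 0 := by
  -- reduce to an ordered nonedge
  suffices hord : ∀ q0 : NonEdge Γ, ¬ (X q0.1.1 v = 0 ∧ X q0.1.2 v = 0) →
      ∀ j, j ≠ q0.1.1 → j ≠ q0.1.2 → X' w j = 0 by
    intro j hjk hjl
    rcases mkNE_cases hkl hna with h | h
    · refine hord (mkNE hkl hna) ?_ j ?_ ?_ <;> rw [h]
      · intro ⟨h1, h2⟩; exact hXk ⟨h1, h2⟩
      · exact hjk
      · exact hjl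
    · refine hord (mkNE hkl hna) ?_ j ?_ ?_ <;> rw [h]
      · intro ⟨h1, h2⟩; exact hXk ⟨h2, h1⟩
      · exact hjl
      · exact hjk
  intro q0 hq0 j hjk hjl
  set a := q0.1.1 with ha
  set b := q0.1.2 with hb
  have hab : a ≠ b := ne_of_lt q0.2.1
  set D := X a v * X b w - X b v * X a w with hD
  have hDne : D ≠ 0 := by
    intro hD0
    apply hq0
    constructor
    · have h1 := key1 hG2 hXX' hstar q0 b
      rw [← ha, ← hb, ← hD, hD0, Matrix.one_apply_eq, Matrix.one_apply_ne hab] at h1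
      simpa using h1
    · have h2 := key1 hG2 hXX' hstar q0 a
      rw [← ha, ← hb, ← hD, hD0, Matrix.one_apply_eq, Matrix.one_apply_ne' hab] at h2
      simpa using h2.symm
  have h := key1 hG2 hXX' hstar q0 j
  rw [← ha, ← hb, ← hD, Matrix.one_apply_ne' hjl, Matrix.one_apply_ne' hjk] at h
  simp only [mul_zero, zero_add] at h
  rcases mul_eq_zero.mp h.symm with h0 | h0
  · exact absurd h0 hDne
  · exact h0

theorem colv_ne_zero (hX'X : X' * X = 1) (hcol : ∀ u, X u v = 0) : False := by
  have h1 : (1 : Matrix (Fin n) (Fin n) ℤ) v v = 0 := by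
    rw [← hX'X, Matrix.mul_apply]
    apply Finset.sum_eq_zero
    intro u _
    rw [hcol u, mul_zero]
  rw [Matrix.one_apply_eq] at h1
  exact one_ne_zero h1

theorem L2 (hvw : v ≠ w)
    (hG2 : ∀ u, u ≠ v → u ≠ w → Γ.Adj v u)
    (hG3 : ∀ k, k ≠ v → ∃ l₁ l₂, l₁ ≠ l₂ ∧ l₁ ≠ k ∧ l₂ ≠ k ∧ ¬Γ.Adj k l₁ ∧ ¬Γ.Adj k l₂)
    (hG4 : ∀ k, ∃ l, l ≠ k ∧ ¬ Γ.Adj k l)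
    (hXX' : X * X' = 1) (hX'X : X' * X = 1)
    (hstar : ∀ i j, Γ.Adj i j → ∀ q : NonEdge Γ,
      X q.1.2 j * X q.1.1 i = X q.1.2 i * X q.1.1 j) :
    ∀ k, k ≠ v → X k v = 0 := by
  by_cases hcase : ∀ q : NonEdge Γ, X q.1.1 v = 0 ∧ X q.1.2 v = 0
  · exfalso
    apply colv_ne_zero hX'X
    intro u
    obtain ⟨l, hlu, hna⟩ := hG4 u
    rcases mkNE_cases (Ne.symm hlu) hna with h | h
    · have hc := (hcase (mkNE (Ne.symm hlu) hna)).1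
      rw [h] at hc
      exact hc
    · have hc := (hcase (mkNE (Ne.symm hlu) hna)).2
      rw [h] at hc
      exact hc
  · intro k hkv
    by_contra hXkv
    obtain ⟨l₁, l₂, h12, h1k, h2k, hna1, hna2⟩ := hG3 k hkv
    have hsupp : ∀ j, j ≠ k → X' w j = 0 := by
      intro j hjk
      rcases eq_or_ne j l₁ with rfl | hjl1
      · exact L1' hG2 hXX' hstar (Ne.symm h2k) hna2
          (fun hc => hXkv hc.1) j hjk (fun hc => h12 hc)
      · exact L1' hG2 hXX' hstar (Ne.symm h1k) hna1
          (fun hc => hXkv hc.1) j hjk hjl1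
    have hwk : X' w k ≠ 0 := by
      intro h0
      have h1 : (1 : Matrix (Fin n) (Fin n) ℤ) w w = 0 := by
        rw [← hX'X, Matrix.mul_apply]
        apply Finset.sum_eq_zero
        intro u _
        rcases eq_or_ne u k with rfl | huk
        · rw [h0, zero_mul]
        · rw [hsupp u huk, zero_mul]
      rw [Matrix.one_apply_eq] at h1
      exact one_ne_zero h1
    -- (X' * X) w v = 0 but equals X' w k * X k v
    have h2 : (0 : ℤ) = X' w k * X k v := by
      have h3 : (X' * X) w v = (1 : Matrix (Fin n) (Fin n) ℤ) w v := by rw [hX'X]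
      rw [Matrix.mul_apply, Matrix.one_apply_ne (Ne.symm hvw)] at h3
      rw [Finset.sum_eq_single k ?h4 ?h5] at h3
      · exact h3.symm
      · intro u _ huk
        rw [hsupp u huk, zero_mul]
      · intro hk; exact absurd (Finset.mem_univ k) hk
    rcases mul_eq_zero.mp h2.symm with h0 | h0
    · exact hwk h0
    · exact hXkv h0


theorem L3 (hvw : v ≠ w) (hnadj : ¬ Γ.Adj v w)
    (hG2 : ∀ u, u ≠ v → u ≠ w → Γ.Adj v u)
    (hG3 : ∀ k, k ≠ v → ∃ l₁ l₂, l₁ ≠ l₂ ∧ l₁ ≠ k ∧ l₂ ≠ k ∧ ¬Γ.Adj k l₁ ∧ ¬Γ.Adj k l₂)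
    (hG4 : ∀ k, ∃ l, l ≠ k ∧ ¬ Γ.Adj k l)
    (hXX' : X * X' = 1) (hX'X : X' * X = 1)
    (hstar : ∀ i j, Γ.Adj i j → ∀ q : NonEdge Γ,
      X q.1.2 j * X q.1.1 i = X q.1.2 i * X q.1.1 j) :
    ∀ j, j ≠ v → j ≠ w → X' w j = 0 := by
  intro j hjv hjw
  by_contra h0
  have hboth : X v v = 0 ∧ X w v = 0 := by
    by_contra hc
    exact h0 (L1' hG2 hXX' hstar hvw hnadj hc j hjv hjw)
  apply colv_ne_zero hX'X
  intro u
  rcases eq_or_ne u v with h | huv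
  · rw [h]; exact hboth.1
  · exact L2 hvw hG2 hG3 hG4 hXX' hX'X hstar u huv

variable (Γ) in
/-- the compound matrix on non-edges -/
def Cform (A : Matrix (Fin n) (Fin n) ℤ) : Matrix (NonEdge Γ) (NonEdge Γ) ℤ :=
  Matrix.of fun q p => A q.1.2 p.1.2 * A q.1.1 p.1.1 - A q.1.2 p.1.1 * A q.1.1 p.1.2

theorem matrix_core (hvw : v ≠ w) (hnadj : ¬ Γ.Adj v w)
    (hG2 : ∀ u, u ≠ v → u ≠ w → Γ.Adj v u)
    (hG3 : ∀ k, k ≠ v → ∃ l₁ l₂, l₁ ≠ l₂ ∧ l₁ ≠ k ∧ l₂ ≠ k ∧ ¬Γ.Adj k l₁ ∧ ¬Γ.Adj k l₂)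
    (hG4 : ∀ k, ∃ l, l ≠ k ∧ ¬ Γ.Adj k l)
    {A A' : Matrix (Fin n) (Fin n) ℤ}
    (hAA' : A * A' = 1) (hA'A : A' * A = 1)
    (hstarA : ∀ i j, Γ.Adj i j → ∀ q : NonEdge Γ,
      A q.1.2 j * A q.1.1 i = A q.1.2 i * A q.1.1 j)
    (hstarA' : ∀ i j, Γ.Adj i j → ∀ q : NonEdge Γ,
      A' q.1.2 j * A' q.1.1 i = A' q.1.2 i * A' q.1.1 j) :
    (A - 1).det = 0 ∨ (Cform Γ A - 1).det = 0 := by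
  have hcolA : ∀ k, k ≠ v → A k v = 0 := L2 hvw hG2 hG3 hG4 hAA' hA'A hstarA
  have hrowA : ∀ j, j ≠ v → j ≠ w → A w j = 0 := L3 hvw hnadj hG2 hG3 hG4 hA'A hAA' hstarA'
  have hAwv : A w v = 0 := hcolA w (Ne.symm hvw)
  have hε : A' v v * A v v = 1 := by
    have h : (A' * A) v v = 1 := by rw [hA'A, Matrix.one_apply_eq]
    rw [Matrix.mul_apply, Finset.sum_eq_single v ?e1 ?e2] at h
    · exact h
    case e1 => intro u _ huv; rw [hcolA u huv, mul_zero]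
    case e2 => intro hv; exact absurd (Finset.mem_univ v) hv
  have hη : A w w * A' w w = 1 := by
    have h : (A * A') w w = 1 := by rw [hAA', Matrix.one_apply_eq]
    rw [Matrix.mul_apply, Finset.sum_eq_single w ?e1 ?e2] at h
    · exact h
    case e1 =>
      intro u _ huw
      rcases eq_or_ne u v with rfl | huv
      · rw [hAwv, zero_mul]
      · rw [hrowA u huv huw, zero_mul]
    case e2 => intro hw; exact absurd (Finset.mem_univ w) hw
  have hAvv : A v v = 1 ∨ A v v = -1 :=
    Int.isUnit_iff.mp (IsUnit.of_mul_eq_one _ (by linarith [hε] : A v v * A' v v = 1))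
  have hAww : A w w = 1 ∨ A w w = -1 :=
    Int.isUnit_iff.mp (IsUnit.of_mul_eq_one _ hη)
  rcases hAvv with hv1 | hv1
  · left
    apply Matrix.det_eq_zero_of_column_eq_zero v
    intro i
    rw [Matrix.sub_apply]
    rcases eq_or_ne i v with rfl | hiv
    · rw [hv1, Matrix.one_apply_eq, sub_self]
    · rw [hcolA i hiv, Matrix.one_apply_ne hiv, sub_zero]
  rcases hAww with hw1 | hw1
  · left
    apply Matrix.det_eq_zero_of_row_eq_zero w
    intro j
    rw [Matrix.sub_apply]
    rcases eq_or_ne j w with rfl | hjw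
    · rw [hw1, Matrix.one_apply_eq, sub_self]
    · rcases eq_or_ne j v with rfl | hjv
      · rw [hAwv, Matrix.one_apply_ne (Ne.symm hvw), sub_zero]
      · rw [hrowA j hjv hjw, Matrix.one_apply_ne (Ne.symm hjw), sub_zero]
  · right
    set p0 : NonEdge Γ := mkNE hvw hnadj with hp0
    apply Matrix.det_eq_zero_of_column_eq_zero p0
    intro q
    rw [Matrix.sub_apply]
    rcases eq_or_ne q p0 with rfl | hq
    · rw [Matrix.one_apply_eq]
      have hC : Cform Γ A p0 p0 = 1 := by
        show A p0.1.2 p0.1.2 * A p0.1.1 p0.1.1 - A p0.1.2 p0.1.1 * A p0.1.1 p0.1.2 = 1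
        rcases mkNE_cases hvw hnadj with h | h <;> rw [← hp0] at h
        · rw [h]
          show A w w * A v v - A w v * A v w = 1
          rw [hv1, hw1, hAwv]; ring
        · rw [h]
          show A v v * A w w - A v w * A w v = 1
          rw [hv1, hw1, hAwv]; ring
      rw [hC, sub_self]
    · rw [Matrix.one_apply_ne hq, sub_zero]
      -- v is not an endpoint of q
      have hvnotin : q.1.1 ≠ v ∧ q.1.2 ≠ v := by
        constructor
        · intro h11
          have h12 : q.1.2 = w := by
            by_contra hq2w
            have hne2 : q.1.2 ≠ v := (ne_of_gt (h11 ▸ q.2.1))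
            exact (h11 ▸ q.2.2) (hG2 q.1.2 hne2 hq2w)
          rcases mkNE_cases hvw hnadj with h | h
          · exact hq (Subtype.ext (by rw [← hp0] at h; rw [h]; exact Prod.ext h11 h12))
          · have hlt1 : v < w := by rw [← h11, ← h12]; exact q.2.1
            have hlt2 : w < v := by
              have h2 := (mkNE hvw hnadj).2.1
              rw [h] at h2
              exact h2
            exact absurd hlt1 (lt_asymm hlt2)
        · intro h12
          have h11 : q.1.1 = w := by
            by_contra hq1w
            have hne1 : q.1.1 ≠ v := (ne_of_lt (h12 ▸ q.2.1))
            have hadj : Γ.Adj v q.1.1 := hG2 q.1.1 hne1 hq1w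
            exact (h12 ▸ q.2.2) hadj.symm
          rcases mkNE_cases hvw hnadj with h | h
          · have hlt1 : w < v := by rw [← h11, ← h12]; exact q.2.1
            have hlt2 : v < w := by
              have h2 := (mkNE hvw hnadj).2.1
              rw [h] at h2
              exact h2
            exact absurd hlt1 (lt_asymm hlt2)
          · exact hq (Subtype.ext (by rw [← hp0] at h; rw [h]; exact Prod.ext h11 h12))
      have hq1 : A q.1.1 v = 0 := hcolA _ hvnotin.1
      have hq2 : A q.1.2 v = 0 := hcolA _ hvnotin.2
      show A q.1.2 p0.1.2 * A q.1.1 p0.1.1 - A q.1.2 p0.1.1 * A q.1.1 p0.1.2 = 0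
      rcases mkNE_cases hvw hnadj with h | h
      · rw [← hp0] at h
        rw [h]
        show A q.1.2 w * A q.1.1 v - A q.1.2 v * A q.1.1 w = 0
        rw [hq1, hq2]; ring
      · rw [← hp0] at h
        rw [h]
        show A q.1.2 v * A q.1.1 w - A q.1.2 w * A q.1.1 v = 0
        rw [hq1, hq2]; ring

end Core


section Counting

theorem cardS (k : Fin n) :
    ((Finset.univ.filter (fun l => l ≠ k ∧ ¬ Γ.Adj k l)).card : ℤ)
      = (n : ℤ) - 1 - Γ.degree k := by
  classical
  set S := Finset.univ.filter (fun l => l ≠ k ∧ ¬ Γ.Adj k l) with hS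
  have hsub : Γ.neighborFinset k ⊆ Finset.univ.erase k := by
    intro l hl
    rw [SimpleGraph.mem_neighborFinset] at hl
    exact Finset.mem_erase.mpr ⟨hl.ne', Finset.mem_univ l⟩
  have hset : S = (Finset.univ.erase k) \ Γ.neighborFinset k := by
    ext l
    simp only [hS, Finset.mem_filter, Finset.mem_univ, true_and, Finset.mem_sdiff,
      Finset.mem_erase, SimpleGraph.mem_neighborFinset, and_true]
  have hcard : S.card = (Finset.univ.erase k).card - (Γ.neighborFinset k).card := by
    rw [hset, Finset.card_sdiff_of_subset hsub]
  have hle : (Γ.neighborFinset k).card ≤ (Finset.univ.erase k).card :=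
    Finset.card_le_card hsub
  have herase : (Finset.univ.erase k).card = n - 1 := by
    rw [Finset.card_erase_of_mem (Finset.mem_univ k), Finset.card_univ, Fintype.card_fin]
  have h1 : 1 ≤ n := k.pos
  rw [hcard, herase]
  have hdeg : Γ.degree k = (Γ.neighborFinset k).card := rfl
  rw [hdeg]
  have hle' : (Γ.neighborFinset k).card ≤ n - 1 := herase ▸ hle
  omega

theorem graph_hyps (hmax : ∀ v : Fin n, (Γ.degree v : ℤ) ≤ (n : ℤ) - 2)
    (huniq : ∃! v : Fin n, (Γ.degree v : ℤ) = (n : ℤ) - 2) :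
    ∃ v w : Fin n, v ≠ w ∧ ¬ Γ.Adj v w ∧ (∀ u, u ≠ v → u ≠ w → Γ.Adj v u) ∧
      (∀ k, k ≠ v → ∃ l₁ l₂, l₁ ≠ l₂ ∧ l₁ ≠ k ∧ l₂ ≠ k ∧ ¬Γ.Adj k l₁ ∧ ¬Γ.Adj k l₂) ∧
      (∀ k, ∃ l, l ≠ k ∧ ¬ Γ.Adj k l) := by
  obtain ⟨v, hv, hvuniq⟩ := huniq
  have hSv : ((Finset.univ.filter (fun l => l ≠ v ∧ ¬ Γ.Adj v l)).card : ℤ) = 1 := by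
    rw [cardS v, hv]; ring
  have hSv' : (Finset.univ.filter (fun l => l ≠ v ∧ ¬ Γ.Adj v l)).card = 1 := by
    exact_mod_cast hSv
  obtain ⟨w, hw⟩ := Finset.card_eq_one.mp hSv'
  have hwmem : w ∈ Finset.univ.filter (fun l => l ≠ v ∧ ¬ Γ.Adj v l) := by
    rw [hw]; exact Finset.mem_singleton_self w
  rw [Finset.mem_filter] at hwmem
  obtain ⟨-, hwv, hnadj⟩ := hwmem
  refine ⟨v, w, Ne.symm hwv, hnadj, ?_, ?_, ?_⟩
  · intro u huv huw
    by_contra hua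
    have : u ∈ Finset.univ.filter (fun l => l ≠ v ∧ ¬ Γ.Adj v l) :=
      Finset.mem_filter.mpr ⟨Finset.mem_univ u, huv, hua⟩
    rw [hw, Finset.mem_singleton] at this
    exact huw this
  · intro k hkv
    have hlt : (Γ.degree k : ℤ) ≤ (n : ℤ) - 3 := by
      have h1 := hmax k
      have h2 : (Γ.degree k : ℤ) ≠ (n : ℤ) - 2 := fun h => hkv (hvuniq k h)
      omega
    have hcard : 1 < (Finset.univ.filter (fun l => l ≠ k ∧ ¬ Γ.Adj k l)).card := by
      have := cardS (Γ := Γ) k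
      omega
    obtain ⟨l₁, hl₁, l₂, hl₂, h12⟩ := Finset.one_lt_card.mp hcard
    rw [Finset.mem_filter] at hl₁ hl₂
    exact ⟨l₁, l₂, h12, hl₁.2.1, hl₂.2.1, hl₁.2.2, hl₂.2.2⟩
  · intro k
    have hcard : 0 < (Finset.univ.filter (fun l => l ≠ k ∧ ¬ Γ.Adj k l)).card := by
      have := cardS (Γ := Γ) k
      have := hmax k
      omega
    obtain ⟨l, hl⟩ := Finset.card_pos.mp hcard
    rw [Finset.mem_filter] at hl
    exact ⟨l, hl.2.1, hl.2.2⟩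

end Counting


set_option linter.unusedSectionVars false in
theorem twistedConj_equivalence {G : Type*} [Group G] (φ : G →* G) :
    Equivalence (TwistedConj φ) := by
  constructor
  · intro a
    exact ⟨1, by rw [map_one]; group⟩
  · rintro a b ⟨c, rfl⟩
    exact ⟨c⁻¹, by rw [map_inv]; group⟩
  · rintro a b c ⟨d, rfl⟩ ⟨e, rfl⟩
    exact ⟨d * e, by rw [map_mul]; group⟩

theorem rn_top_of_t {G : Type*} [Group G] (φ : G →* G) (t : ℤ → G)
    (h : ∀ m₁ m₂ : ℤ, TwistedConj φ (t m₁) (t m₂) → m₁ = m₂) :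
    ENat.card (Quot (TwistedConj φ)) = ⊤ := by
  have hinj : Function.Injective (fun m : ℤ => Quot.mk (TwistedConj φ) (t m)) := by
    intro m₁ m₂ hm
    exact h m₁ m₂ (((twistedConj_equivalence φ).eqvGen_iff).mp (Quot.eq.mp hm))
  have : Infinite (Quot (TwistedConj φ)) := Infinite.of_injective _ hinj
  exact ENat.card_eq_top_of_infinite

theorem exists_left_null {ι : Type*} [Fintype ι] [DecidableEq ι] {M : Matrix ι ι ℤ}
    (h : M.det = 0) : ∃ g : ι → ℤ, g ≠ 0 ∧ Matrix.vecMul g M = 0 := by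
  obtain ⟨g, hg, hgM⟩ := (Matrix.exists_vecMul_eq_zero_iff).mpr h
  exact ⟨g, hg, hgM⟩

theorem dot_smul_single {ι : Type*} [Fintype ι] [DecidableEq ι] (g : ι → ℤ) (i : ι) (m : ℤ) :
    dotProduct g (m • (Pi.single i 1 : ι → ℤ)) = m * g i := by
  have h1 : (m • (Pi.single i 1 : ι → ℤ)) = Pi.single i m := by
    funext j
    rcases eq_or_ne j i with rfl | hji
    · simp
    · simp [Pi.single_apply, hji]
  rw [h1, dotProduct_single]
  ring

end GGAux

/-- If the maximal degree of `Γ` is `n - 2` and exactly one vertex attains this degree,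
then `G_Γ` has the `R∞`-property. -/
theorem graphGroup_Rinfty_of_unique_max_degree
    {n : ℕ} (Γ : SimpleGraph (Fin n)) [DecidableRel Γ.Adj]
    (hmax : ∀ v, (Γ.degree v : ℤ) ≤ (n : ℤ) - 2)
    (huniq : ∃! v : Fin n, (Γ.degree v : ℤ) = (n : ℤ) - 2) :
    ∀ φ : GraphGroup Γ ≃* GraphGroup Γ, reidemeisterNumber φ.toMonoidHom = ⊤ := by
  classical
  intro φ
  obtain ⟨v, w, hvw, hnadj, hG2, hG3, hG4⟩ := GGAux.graph_hyps hmax huniq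
  have hAA' : GGAux.Amat φ * GGAux.Amat φ.symm = 1 := GGAux.Amat_mul_symm φ
  have hA'A : GGAux.Amat φ.symm * GGAux.Amat φ = 1 := GGAux.Amat_symm_mul φ
  have hstarA : ∀ i j, Γ.Adj i j → ∀ q : NonEdge Γ,
      GGAux.Amat φ q.1.2 j * GGAux.Amat φ q.1.1 i
        = GGAux.Amat φ q.1.2 i * GGAux.Amat φ q.1.1 j :=
    fun i j hij q => GGAux.star_Amat φ hij q
  have hstarA' : ∀ i j, Γ.Adj i j → ∀ q : NonEdge Γ,
      GGAux.Amat φ.symm q.1.2 j * GGAux.Amat φ.symm q.1.1 i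
        = GGAux.Amat φ.symm q.1.2 i * GGAux.Amat φ.symm q.1.1 j :=
    fun i j hij q => GGAux.star_Amat φ.symm hij q
  have hCC : GGAux.Cform Γ (GGAux.Amat φ) = GGAux.Cmat φ := by
    ext q p
    rw [GGAux.Cmat_eq φ q p]
    rfl
  show ENat.card (Quot (TwistedConj φ.toMonoidHom)) = ⊤
  by_cases hdA : (GGAux.Amat φ - 1).det = 0
  · -- Reidemeister infinity detected on the abelianization
    have hd1 : ((1 : Matrix (Fin n) (Fin n) ℤ) - GGAux.Amat φ).det = 0 := by
      rw [← neg_sub (GGAux.Amat φ) 1, Matrix.det_neg, hdA, mul_zero]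
    obtain ⟨g, hg0, hgM⟩ := GGAux.exists_left_null hd1
    obtain ⟨i0, hi0⟩ := Function.ne_iff.mp hg0
    apply GGAux.rn_top_of_t _ (fun m => (xg Γ i0) ^ m)
    intro m₁ m₂ hTC
    obtain ⟨c, hc⟩ := hTC
    simp only [MulEquiv.toMonoidHom_eq_coe, MonoidHom.coe_coe] at hc
    have hpia := congrArg GGAux.pia hc
    rw [GGAux.pia_mul, GGAux.pia_mul, GGAux.pia_inv, GGAux.pia_x_zpow, GGAux.pia_x_zpow,
      GGAux.pia_phi φ c] at hpia
    have hkey : m₁ • GGAux.ee i0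
        = m₂ • GGAux.ee i0 + ((1 - GGAux.Amat φ).mulVec (GGAux.pia c)) := by
      rw [Matrix.sub_mulVec, Matrix.one_mulVec, hpia]
      abel
    have h2 := congrArg (fun x => dotProduct g x) hkey
    simp only [dotProduct_add, GGAux.dot_smul_single,
      Matrix.dotProduct_mulVec, hgM, zero_dotProduct, add_zero] at h2
    exact mul_right_cancel₀ hi0 h2
  · -- Reidemeister infinity detected on the center
    have hdC : (GGAux.Cmat φ - 1).det = 0 := by
      rcases GGAux.matrix_core hvw hnadj hG2 hG3 hG4 hAA' hA'A hstarA hstarA' with h | h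
      · exact absurd h hdA
      · rwa [hCC] at h
    have hd1C : ((1 : Matrix (NonEdge Γ) (NonEdge Γ) ℤ) - GGAux.Cmat φ).det = 0 := by
      rw [← neg_sub (GGAux.Cmat φ) 1, Matrix.det_neg, hdC, mul_zero]
    obtain ⟨g, hg0, hgM⟩ := GGAux.exists_left_null hd1C
    obtain ⟨q0, hq0⟩ := Function.ne_iff.mp hg0
    apply GGAux.rn_top_of_t _ (fun m => (yg Γ q0) ^ m)
    intro m₁ m₂ hTC
    obtain ⟨c, hc⟩ := hTC
    simp only [MulEquiv.toMonoidHom_eq_coe, MonoidHom.coe_coe] at hc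
    have hpia := congrArg GGAux.pia hc
    rw [GGAux.pia_mul, GGAux.pia_mul, GGAux.pia_inv, GGAux.pia_y_zpow, GGAux.pia_y_zpow,
      GGAux.pia_phi φ c] at hpia
    have hker : (1 - GGAux.Amat φ).mulVec (GGAux.pia c) = 0 := by
      rw [Matrix.sub_mulVec, Matrix.one_mulVec]
      funext k
      have h4 := congrFun hpia k
      simp only [Pi.add_apply, Pi.neg_apply, Pi.zero_apply, Pi.sub_apply] at h4 ⊢
      linarith
    have hdet1A : ((1 : Matrix (Fin n) (Fin n) ℤ) - GGAux.Amat φ).det ≠ 0 := by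
      intro h
      apply hdA
      rw [← neg_sub (1 : Matrix (Fin n) (Fin n) ℤ) (GGAux.Amat φ), Matrix.det_neg, h, mul_zero]
    have hpz : GGAux.pia c = 0 := by
      have h5 := congrArg (Matrix.mulVec (Matrix.adjugate (1 - GGAux.Amat φ))) hker
      rw [Matrix.mulVec_mulVec, Matrix.adjugate_mul, Matrix.mulVec_zero,
        Matrix.smul_mulVec, Matrix.one_mulVec] at h5
      funext k
      have h6 := congrFun h5 k
      simp only [Pi.smul_apply, smul_eq_mul, Pi.zero_apply] at h6
      exact (mul_eq_zero.mp h6).resolve_left hdet1A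
    have hcZ : c ∈ GGAux.Zc Γ := GGAux.kerpia hpz
    have hnu : GGAux.nu ((yg Γ q0) ^ m₁)
        = GGAux.nu c + GGAux.nu ((yg Γ q0) ^ m₂) + -(GGAux.nu (φ c)) := by
      rw [hc]
      rw [GGAux.nu_mul _ (by rw [GGAux.pia_mul, hpz, GGAux.pia_y_zpow, add_zero])]
      rw [GGAux.nu_mul _ hpz]
      rw [GGAux.nu_inv (by rw [GGAux.pia_phi φ c, hpz, Matrix.mulVec_zero])]
    rw [GGAux.nu_phi φ hcZ, GGAux.nu_y_zpow, GGAux.nu_y_zpow] at hnu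
    have hkey : m₁ • Pi.single q0 (1 : ℤ)
        = m₂ • Pi.single q0 (1 : ℤ)
          + ((1 - GGAux.Cmat φ).mulVec (GGAux.nu c)) := by
      rw [Matrix.sub_mulVec, Matrix.one_mulVec, hnu]
      abel
    have h2 := congrArg (fun x => dotProduct g x) hkey
    simp only [dotProduct_add, GGAux.dot_smul_single,
      Matrix.dotProduct_mulVec, hgM, zero_dotProduct, add_zero] at h2
    exact mul_right_cancel₀ hq0 h2
end

section
/- For any two finite undirected simple graphs Γ^(1) and Γ^(2), the group G_{Γ^(1) ∗ Γ^(2)} associated to the simplicial join of Γ^(1) and Γ^(2) is isomorphic to the direct product G_{Γ^(1)} × G_{Γ^(2)}. -/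
open scoped commutatorElement

/-- The simplicial join of two graphs, on the sum of the vertex types: all edges of the two
graphs together with all pairs consisting of one vertex of each graph. -/
def sumJoin {V₁ V₂ : Type} (Γ₁ : SimpleGraph V₁) (Γ₂ : SimpleGraph V₂) :
    SimpleGraph (V₁ ⊕ V₂) where
  Adj a b :=
    (a.isLeft ∧ b.isRight) ∨ (a.isRight ∧ b.isLeft) ∨
    (∃ i j, a = Sum.inl i ∧ b = Sum.inl j ∧ Γ₁.Adj i j) ∨
    (∃ i j, a = Sum.inr i ∧ b = Sum.inr j ∧ Γ₂.Adj i j)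
  symm := by
    constructor
    rintro a b (⟨h1, h2⟩ | ⟨h1, h2⟩ | ⟨i, j, rfl, rfl, h⟩ | ⟨i, j, rfl, rfl, h⟩)
    · exact Or.inr (Or.inl ⟨h2, h1⟩)
    · exact Or.inl ⟨h2, h1⟩
    · exact Or.inr (Or.inr (Or.inl ⟨j, i, rfl, rfl, h.symm⟩))
    · exact Or.inr (Or.inr (Or.inr ⟨j, i, rfl, rfl, h.symm⟩))
  loopless := by
    constructor
    rintro a (⟨h1, h2⟩ | ⟨h1, h2⟩ | ⟨i, j, rfl, h2, h⟩ | ⟨i, j, rfl, h2, h⟩)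
    · cases a <;> simp_all
    · cases a <;> simp_all
    · cases Sum.inl.inj h2; exact Γ₁.loopless.irrefl i h
    · cases Sum.inr.inj h2; exact Γ₂.loopless.irrefl i h

section Aux

/-! ### Generic lemmas about `GraphGroup` -/

lemma rels_eq_one {α : Type} {rels : Set (FreeGroup α)} {r : FreeGroup α} (h : r ∈ rels) :
    (PresentedGroup.mk rels r : PresentedGroup rels) = 1 :=
  (QuotientGroup.eq_one_iff r).2 (Subgroup.subset_normalClosure h)

variable {V : Type} [LinearOrder V] (Γ : SimpleGraph V)

lemma adj_commutator_eq_one {i j : V} (h : Γ.Adj i j) : ⁅xg Γ j, xg Γ i⁆ = 1 := by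
  have : ⁅xg Γ j, xg Γ i⁆ =
      PresentedGroup.mk (GraphRels Γ) ⁅FreeGroup.of (Sum.inl j), FreeGroup.of (Sum.inl i)⁆ :=
    (map_commutatorElement _ _ _).symm
  rw [this]
  exact rels_eq_one (Or.inl ⟨i, j, h, rfl⟩)

lemma nonedge_rel (p : NonEdge Γ) : ⁅xg Γ p.1.2, xg Γ p.1.1⁆ = yg Γ p := by
  have h1 : (PresentedGroup.mk (GraphRels Γ)
      (⁅FreeGroup.of (Sum.inl p.1.2), FreeGroup.of (Sum.inl p.1.1)⁆ *
        (FreeGroup.of (Sum.inr p))⁻¹) : GraphGroup Γ) = 1 :=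
    rels_eq_one (Or.inr (Or.inl ⟨p, rfl⟩))
  rw [map_mul, map_inv, map_commutatorElement, mul_inv_eq_one] at h1
  exact h1

lemma central_rel (l : V) (p : NonEdge Γ) : ⁅xg Γ l, yg Γ p⁆ = 1 := by
  have : ⁅xg Γ l, yg Γ p⁆ =
      PresentedGroup.mk (GraphRels Γ) ⁅FreeGroup.of (Sum.inl l), FreeGroup.of (Sum.inr p)⁆ :=
    (map_commutatorElement _ _ _).symm
  rw [this]
  exact rels_eq_one (Or.inr (Or.inr ⟨l, p, rfl⟩))

lemma xy_commute (l : V) (p : NonEdge Γ) : Commute (xg Γ l) (yg Γ p) :=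
  commutatorElement_eq_one_iff_commute.mp (central_rel Γ l p)

lemma yy_commute (p q : NonEdge Γ) : Commute (yg Γ p) (yg Γ q) := by
  rw [← nonedge_rel Γ q, commutatorElement_def]
  have h1 := (xy_commute Γ q.1.2 p).symm
  have h2 := (xy_commute Γ q.1.1 p).symm
  exact ((h1.mul_right h2).mul_right h1.inv_right).mul_right h2.inv_right

lemma prod_commutator {G H : Type*} [Group G] [Group H] (a b : G × H) :
    ⁅a, b⁆ = (⁅a.1, b.1⁆, ⁅a.2, b.2⁆) := rfl

end Aux

section Join

variable {n₁ n₂ : ℕ} (Γ₁ : SimpleGraph (Fin n₁)) (Γ₂ : SimpleGraph (Fin n₂))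

/-- The join graph realized on `Fin (n₁ + n₂)`. -/
abbrev JG : SimpleGraph (Fin (n₁ + n₂)) :=
  SimpleGraph.comap (⇑finSumFinEquiv.symm) (sumJoin Γ₁ Γ₂)

lemma sumJoin_adj_ll {i j : Fin n₁} :
    (sumJoin Γ₁ Γ₂).Adj (Sum.inl i) (Sum.inl j) ↔ Γ₁.Adj i j := by
  constructor
  · rintro (⟨h1, h2⟩ | ⟨h1, h2⟩ | ⟨a, b, ha, hb, h⟩ | ⟨a, b, ha, hb, h⟩) <;> simp_all
  · exact fun h => Or.inr (Or.inr (Or.inl ⟨i, j, rfl, rfl, h⟩))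

lemma sumJoin_adj_rr {i j : Fin n₂} :
    (sumJoin Γ₁ Γ₂).Adj (Sum.inr i) (Sum.inr j) ↔ Γ₂.Adj i j := by
  constructor
  · rintro (⟨h1, h2⟩ | ⟨h1, h2⟩ | ⟨a, b, ha, hb, h⟩ | ⟨a, b, ha, hb, h⟩) <;> simp_all
  · exact fun h => Or.inr (Or.inr (Or.inr ⟨i, j, rfl, rfl, h⟩))

lemma sumJoin_adj_lr (i : Fin n₁) (j : Fin n₂) :
    (sumJoin Γ₁ Γ₂).Adj (Sum.inl i) (Sum.inr j) :=
  Or.inl ⟨rfl, rfl⟩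

lemma jg_adj {u v : Fin n₁ ⊕ Fin n₂} :
    (JG Γ₁ Γ₂).Adj (finSumFinEquiv u) (finSumFinEquiv v) ↔ (sumJoin Γ₁ Γ₂).Adj u v := by
  show (sumJoin Γ₁ Γ₂).Adj (finSumFinEquiv.symm (finSumFinEquiv u))
    (finSumFinEquiv.symm (finSumFinEquiv v)) ↔ _
  rw [Equiv.symm_apply_apply, Equiv.symm_apply_apply]

lemma lt_ll {i j : Fin n₁} :
    (finSumFinEquiv (Sum.inl i) : Fin (n₁ + n₂)) < finSumFinEquiv (Sum.inl j) ↔ i < j := by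
  simp only [finSumFinEquiv_apply_left, Fin.lt_def, Fin.coe_castAdd]

lemma lt_rr {i j : Fin n₂} :
    (finSumFinEquiv (Sum.inr i) : Fin (n₁ + n₂)) < finSumFinEquiv (Sum.inr j) ↔ i < j := by
  simp only [finSumFinEquiv_apply_right, Fin.lt_def, Fin.coe_natAdd]
  omega

/-- Convert a non-edge of the join to a non-edge of one of the factors. -/
def toSumAux : (u v : Fin n₁ ⊕ Fin n₂) →
    ((finSumFinEquiv u : Fin (n₁ + n₂)) < finSumFinEquiv v) →
    ¬ (sumJoin Γ₁ Γ₂).Adj u v → NonEdge Γ₁ ⊕ NonEdge Γ₂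
  | .inl i, .inl j, hlt, hna =>
      .inl ⟨(i, j), (lt_ll).mp hlt, fun h => hna ((sumJoin_adj_ll Γ₁ Γ₂).mpr h)⟩
  | .inr i, .inr j, hlt, hna =>
      .inr ⟨(i, j), (lt_rr).mp hlt, fun h => hna ((sumJoin_adj_rr Γ₁ Γ₂).mpr h)⟩
  | .inl i, .inr j, _, hna => absurd (sumJoin_adj_lr Γ₁ Γ₂ i j) hna
  | .inr i, .inl j, _, hna => absurd ((sumJoin_adj_lr Γ₁ Γ₂ j i).symm) hna

def toSum (p : NonEdge (JG Γ₁ Γ₂)) : NonEdge Γ₁ ⊕ NonEdge Γ₂ :=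
  toSumAux Γ₁ Γ₂ (finSumFinEquiv.symm p.1.1) (finSumFinEquiv.symm p.1.2)
    (by simpa using p.2.1) p.2.2

/-- Non-edges of a factor give non-edges of the join. -/
def neL (q : NonEdge Γ₁) : NonEdge (JG Γ₁ Γ₂) :=
  ⟨(finSumFinEquiv (Sum.inl q.1.1), finSumFinEquiv (Sum.inl q.1.2)),
    (lt_ll).mpr q.2.1,
    fun h => q.2.2 ((sumJoin_adj_ll Γ₁ Γ₂).mp ((jg_adj Γ₁ Γ₂).mp h))⟩

def neR (q : NonEdge Γ₂) : NonEdge (JG Γ₁ Γ₂) :=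
  ⟨(finSumFinEquiv (Sum.inr q.1.1), finSumFinEquiv (Sum.inr q.1.2)),
    (lt_rr).mpr q.2.1,
    fun h => q.2.2 ((sumJoin_adj_rr Γ₁ Γ₂).mp ((jg_adj Γ₁ Γ₂).mp h))⟩

lemma toSum_neL (q : NonEdge Γ₁) : toSum Γ₁ Γ₂ (neL Γ₁ Γ₂ q) = .inl q := by
  simp only [toSum, neL, Equiv.symm_apply_apply]
  rfl

lemma toSum_neR (q : NonEdge Γ₂) : toSum Γ₁ Γ₂ (neR Γ₁ Γ₂ q) = .inr q := by
  simp only [toSum, neR, Equiv.symm_apply_apply]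
  rfl

lemma ofSum_toSumAux (u v : Fin n₁ ⊕ Fin n₂) (h1 : _) (h2 : _) :
    (Sum.elim (neL Γ₁ Γ₂) (neR Γ₁ Γ₂) (toSumAux Γ₁ Γ₂ u v h1 h2)).1 =
      (finSumFinEquiv u, finSumFinEquiv v) := by
  match u, v, h1, h2 with
  | .inl i, .inl j, h1, h2 => rfl
  | .inr i, .inr j, h1, h2 => rfl
  | .inl i, .inr j, h1, h2 => exact absurd (sumJoin_adj_lr Γ₁ Γ₂ i j) h2
  | .inr i, .inl j, h1, h2 =>
      exact absurd ((sumJoin_adj_lr Γ₁ Γ₂ j i).symm) h2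

lemma ofSum_toSum (p : NonEdge (JG Γ₁ Γ₂)) :
    Sum.elim (neL Γ₁ Γ₂) (neR Γ₁ Γ₂) (toSum Γ₁ Γ₂ p) = p := by
  apply Subtype.ext
  exact (ofSum_toSumAux Γ₁ Γ₂ _ _ _ _).trans (by simp)

/-! ### The homomorphism from the join group to the product -/

/-- Image of a generator of the join group in the product group. -/
def fgen : GraphGens (JG Γ₁ Γ₂) → GraphGroup Γ₁ × GraphGroup Γ₂
  | .inl v => Sum.elim (fun i => (xg Γ₁ i, 1)) (fun j => (1, xg Γ₂ j)) (finSumFinEquiv.symm v)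
  | .inr p => Sum.elim (fun q => (yg Γ₁ q, 1)) (fun q => (1, yg Γ₂ q)) (toSum Γ₁ Γ₂ p)

lemma key1 (u v : Fin n₁ ⊕ Fin n₂) (h : (sumJoin Γ₁ Γ₂).Adj u v) :
    ⁅Sum.elim (fun i => ((xg Γ₁ i : GraphGroup Γ₁), (1 : GraphGroup Γ₂)))
        (fun j => (1, xg Γ₂ j)) v,
      Sum.elim (fun i => ((xg Γ₁ i : GraphGroup Γ₁), (1 : GraphGroup Γ₂)))
        (fun j => (1, xg Γ₂ j)) u⁆ = 1 := by
  cases u with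
  | inl i =>
    cases v with
    | inl j =>
      rw [Sum.elim_inl, Sum.elim_inl, prod_commutator]
      have := adj_commutator_eq_one Γ₁ ((sumJoin_adj_ll Γ₁ Γ₂).mp h)
      simp_all [Prod.ext_iff]
    | inr j => rw [Sum.elim_inl, Sum.elim_inr, prod_commutator]; simp [Prod.ext_iff]
  | inr i =>
    cases v with
    | inl j => rw [Sum.elim_inl, Sum.elim_inr, prod_commutator]; simp [Prod.ext_iff]
    | inr j =>
      rw [Sum.elim_inr, Sum.elim_inr, prod_commutator]
      have := adj_commutator_eq_one Γ₂ ((sumJoin_adj_rr Γ₁ Γ₂).mp h)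
      simp_all [Prod.ext_iff]

lemma key2 (u v : Fin n₁ ⊕ Fin n₂) (h1 : _) (h2 : _) :
    ⁅Sum.elim (fun i => ((xg Γ₁ i : GraphGroup Γ₁), (1 : GraphGroup Γ₂)))
        (fun j => (1, xg Γ₂ j)) v,
      Sum.elim (fun i => ((xg Γ₁ i : GraphGroup Γ₁), (1 : GraphGroup Γ₂)))
        (fun j => (1, xg Γ₂ j)) u⁆ =
    Sum.elim (fun q => ((yg Γ₁ q : GraphGroup Γ₁), (1 : GraphGroup Γ₂)))
      (fun q => (1, yg Γ₂ q)) (toSumAux Γ₁ Γ₂ u v h1 h2) := by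
  match u, v, h1, h2 with
  | .inl i, .inl j, h1, h2 =>
    rw [Sum.elim_inl, Sum.elim_inl, prod_commutator, toSumAux, Sum.elim_inl]
    have := nonedge_rel Γ₁ ⟨(i, j), (lt_ll).mp h1,
      fun h => h2 ((sumJoin_adj_ll Γ₁ Γ₂).mpr h)⟩
    simp_all [Prod.ext_iff]
  | .inr i, .inr j, h1, h2 =>
    rw [Sum.elim_inr, Sum.elim_inr, prod_commutator, toSumAux, Sum.elim_inr]
    have := nonedge_rel Γ₂ ⟨(i, j), (lt_rr).mp h1,
      fun h => h2 ((sumJoin_adj_rr Γ₁ Γ₂).mpr h)⟩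
    simp_all [Prod.ext_iff]
  | .inl i, .inr j, h1, h2 => exact absurd (sumJoin_adj_lr Γ₁ Γ₂ i j) h2
  | .inr i, .inl j, h1, h2 =>
    exact absurd ((sumJoin_adj_lr Γ₁ Γ₂ j i).symm) h2

lemma key3 (u : Fin n₁ ⊕ Fin n₂) (s : NonEdge Γ₁ ⊕ NonEdge Γ₂) :
    ⁅Sum.elim (fun i => ((xg Γ₁ i : GraphGroup Γ₁), (1 : GraphGroup Γ₂)))
        (fun j => (1, xg Γ₂ j)) u,
      Sum.elim (fun q => ((yg Γ₁ q : GraphGroup Γ₁), (1 : GraphGroup Γ₂)))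
        (fun q => (1, yg Γ₂ q)) s⁆ = 1 := by
  cases u <;> cases s <;>
    (rw [prod_commutator]; simp [Prod.ext_iff, central_rel])

lemma fgen_rels : ∀ r ∈ GraphRels (JG Γ₁ Γ₂), FreeGroup.lift (fgen Γ₁ Γ₂) r = 1 := by
  rintro r (⟨i, j, hadj, rfl⟩ | ⟨p, rfl⟩ | ⟨l, p, rfl⟩)
  · rw [map_commutatorElement, FreeGroup.lift_apply_of, FreeGroup.lift_apply_of]
    exact key1 Γ₁ Γ₂ (finSumFinEquiv.symm i) (finSumFinEquiv.symm j) hadj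
  · rw [map_mul, map_inv, map_commutatorElement, FreeGroup.lift_apply_of, FreeGroup.lift_apply_of,
      FreeGroup.lift_apply_of, mul_inv_eq_one]
    exact key2 Γ₁ Γ₂ (finSumFinEquiv.symm p.1.1) (finSumFinEquiv.symm p.1.2) _ _
  · rw [map_commutatorElement, FreeGroup.lift_apply_of, FreeGroup.lift_apply_of]
    exact key3 Γ₁ Γ₂ (finSumFinEquiv.symm l) (toSum Γ₁ Γ₂ p)

/-- The homomorphism from the join group to the product. -/
def joinToProd : GraphGroup (JG Γ₁ Γ₂) →* GraphGroup Γ₁ × GraphGroup Γ₂ :=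
  PresentedGroup.toGroup (fgen_rels Γ₁ Γ₂)

/-! ### The homomorphisms from the factors to the join group -/

def g1 : GraphGens Γ₁ → GraphGroup (JG Γ₁ Γ₂) :=
  Sum.elim (fun i => xg (JG Γ₁ Γ₂) (finSumFinEquiv (Sum.inl i)))
    (fun q => yg (JG Γ₁ Γ₂) (neL Γ₁ Γ₂ q))

def g2 : GraphGens Γ₂ → GraphGroup (JG Γ₁ Γ₂) :=
  Sum.elim (fun i => xg (JG Γ₁ Γ₂) (finSumFinEquiv (Sum.inr i)))
    (fun q => yg (JG Γ₁ Γ₂) (neR Γ₁ Γ₂ q))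

lemma g1_rels : ∀ r ∈ GraphRels Γ₁, FreeGroup.lift (g1 Γ₁ Γ₂) r = 1 := by
  rintro r (⟨i, j, hadj, rfl⟩ | ⟨p, rfl⟩ | ⟨l, p, rfl⟩)
  · rw [map_commutatorElement, FreeGroup.lift_apply_of, FreeGroup.lift_apply_of]
    exact adj_commutator_eq_one _
      ((jg_adj Γ₁ Γ₂).mpr ((sumJoin_adj_ll Γ₁ Γ₂).mpr hadj))
  · rw [map_mul, map_inv, map_commutatorElement, FreeGroup.lift_apply_of, FreeGroup.lift_apply_of,
      FreeGroup.lift_apply_of, mul_inv_eq_one]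
    exact nonedge_rel (JG Γ₁ Γ₂) (neL Γ₁ Γ₂ p)
  · rw [map_commutatorElement, FreeGroup.lift_apply_of, FreeGroup.lift_apply_of]
    exact central_rel (JG Γ₁ Γ₂) _ _

lemma g2_rels : ∀ r ∈ GraphRels Γ₂, FreeGroup.lift (g2 Γ₁ Γ₂) r = 1 := by
  rintro r (⟨i, j, hadj, rfl⟩ | ⟨p, rfl⟩ | ⟨l, p, rfl⟩)
  · rw [map_commutatorElement, FreeGroup.lift_apply_of, FreeGroup.lift_apply_of]
    exact adj_commutator_eq_one _
      ((jg_adj Γ₁ Γ₂).mpr ((sumJoin_adj_rr Γ₁ Γ₂).mpr hadj))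
  · rw [map_mul, map_inv, map_commutatorElement, FreeGroup.lift_apply_of, FreeGroup.lift_apply_of,
      FreeGroup.lift_apply_of, mul_inv_eq_one]
    exact nonedge_rel (JG Γ₁ Γ₂) (neR Γ₁ Γ₂ p)
  · rw [map_commutatorElement, FreeGroup.lift_apply_of, FreeGroup.lift_apply_of]
    exact central_rel (JG Γ₁ Γ₂) _ _

def psi1 : GraphGroup Γ₁ →* GraphGroup (JG Γ₁ Γ₂) :=
  PresentedGroup.toGroup (g1_rels Γ₁ Γ₂)

def psi2 : GraphGroup Γ₂ →* GraphGroup (JG Γ₁ Γ₂) :=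
  PresentedGroup.toGroup (g2_rels Γ₁ Γ₂)

lemma gen_comm (s : GraphGens Γ₁) (t : GraphGens Γ₂) :
    Commute (g1 Γ₁ Γ₂ s) (g2 Γ₁ Γ₂ t) := by
  cases s with
  | inl i =>
    cases t with
    | inl j =>
      exact (commutatorElement_eq_one_iff_commute.mp (adj_commutator_eq_one _
        ((jg_adj Γ₁ Γ₂).mpr (sumJoin_adj_lr Γ₁ Γ₂ i j)))).symm
    | inr q => exact xy_commute _ _ _
  | inr q =>
    cases t with
    | inl j => exact (xy_commute _ _ _).symm
    | inr q' => exact yy_commute _ _ _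

lemma psi_comm : ∀ (a : GraphGroup Γ₁) (b : GraphGroup Γ₂),
    Commute (psi1 Γ₁ Γ₂ a) (psi2 Γ₁ Γ₂ b) := by
  have step1 : ∀ (s : GraphGens Γ₁) (b : GraphGroup Γ₂),
      Commute (psi1 Γ₁ Γ₂ (PresentedGroup.of s)) (psi2 Γ₁ Γ₂ b) := by
    intro s b
    have hb : b ∈ Subgroup.comap (psi2 Γ₁ Γ₂)
        (Subgroup.centralizer {psi1 Γ₁ Γ₂ (PresentedGroup.of s)}) := by
      apply PresentedGroup.generated_by
      intro t
      rw [Subgroup.mem_comap, Subgroup.mem_centralizer_iff]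
      rintro x hx
      rw [Set.mem_singleton_iff] at hx
      subst hx
      have := gen_comm Γ₁ Γ₂ s t
      rw [psi1, psi2, PresentedGroup.toGroup.of, PresentedGroup.toGroup.of]
      exact this
    rw [Subgroup.mem_comap, Subgroup.mem_centralizer_iff] at hb
    exact hb _ rfl
  intro a b
  have ha : a ∈ Subgroup.comap (psi1 Γ₁ Γ₂)
      (Subgroup.centralizer {psi2 Γ₁ Γ₂ b}) := by
    apply PresentedGroup.generated_by
    intro s
    rw [Subgroup.mem_comap, Subgroup.mem_centralizer_iff]
    rintro x hx
    rw [Set.mem_singleton_iff] at hx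
    subst hx
    exact (step1 s b).symm
  rw [Subgroup.mem_comap, Subgroup.mem_centralizer_iff] at ha
  exact (ha _ rfl).symm

def prodToJoin : GraphGroup Γ₁ × GraphGroup Γ₂ →* GraphGroup (JG Γ₁ Γ₂) :=
  MonoidHom.noncommCoprod (psi1 Γ₁ Γ₂) (psi2 Γ₁ Γ₂) (psi_comm Γ₁ Γ₂)

/-! ### The round trips -/

lemma prodToJoin_elimX (u : Fin n₁ ⊕ Fin n₂) :
    prodToJoin Γ₁ Γ₂ (Sum.elim (fun i => ((xg Γ₁ i : GraphGroup Γ₁), (1 : GraphGroup Γ₂)))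
      (fun j => (1, xg Γ₂ j)) u) = xg (JG Γ₁ Γ₂) (finSumFinEquiv u) := by
  cases u with
  | inl i =>
    simp only [Sum.elim_inl, prodToJoin, MonoidHom.noncommCoprod_apply, map_one, mul_one]
    rw [psi1, xg, PresentedGroup.toGroup.of]
    rfl
  | inr j =>
    simp only [Sum.elim_inr, prodToJoin, MonoidHom.noncommCoprod_apply, map_one, one_mul]
    rw [psi2, xg, PresentedGroup.toGroup.of]
    rfl

lemma prodToJoin_elimY (s : NonEdge Γ₁ ⊕ NonEdge Γ₂) :
    prodToJoin Γ₁ Γ₂ (Sum.elim (fun q => ((yg Γ₁ q : GraphGroup Γ₁), (1 : GraphGroup Γ₂)))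
      (fun q => (1, yg Γ₂ q)) s) = yg (JG Γ₁ Γ₂) (Sum.elim (neL Γ₁ Γ₂) (neR Γ₁ Γ₂) s) := by
  cases s with
  | inl q =>
    simp only [Sum.elim_inl, prodToJoin, MonoidHom.noncommCoprod_apply, map_one, mul_one]
    rw [psi1, yg, PresentedGroup.toGroup.of]
    rfl
  | inr q =>
    simp only [Sum.elim_inr, prodToJoin, MonoidHom.noncommCoprod_apply, map_one, one_mul]
    rw [psi2, yg, PresentedGroup.toGroup.of]
    rfl

lemma left_inv_hom : (prodToJoin Γ₁ Γ₂).comp (joinToProd Γ₁ Γ₂) = MonoidHom.id _ := by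
  apply PresentedGroup.ext
  intro g
  rw [MonoidHom.comp_apply, MonoidHom.id_apply, joinToProd, PresentedGroup.toGroup.of]
  cases g with
  | inl v =>
    have := prodToJoin_elimX Γ₁ Γ₂ (finSumFinEquiv.symm v)
    rw [Equiv.apply_symm_apply] at this
    exact this
  | inr p =>
    have := prodToJoin_elimY Γ₁ Γ₂ (toSum Γ₁ Γ₂ p)
    rw [ofSum_toSum] at this
    exact this

lemma right_inv_psi1 (a : GraphGroup Γ₁) :
    joinToProd Γ₁ Γ₂ (psi1 Γ₁ Γ₂ a) = (a, 1) := by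
  have : (joinToProd Γ₁ Γ₂).comp (psi1 Γ₁ Γ₂) =
      MonoidHom.inl (GraphGroup Γ₁) (GraphGroup Γ₂) := by
    apply PresentedGroup.ext
    intro s
    rw [MonoidHom.comp_apply, psi1, PresentedGroup.toGroup.of]
    cases s with
    | inl i =>
      show joinToProd Γ₁ Γ₂ (PresentedGroup.of (Sum.inl (finSumFinEquiv (Sum.inl i)))) = _
      rw [joinToProd, PresentedGroup.toGroup.of]
      show Sum.elim _ _ (finSumFinEquiv.symm (finSumFinEquiv (Sum.inl i))) = _
      rw [Equiv.symm_apply_apply, Sum.elim_inl]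
      rfl
    | inr q =>
      show joinToProd Γ₁ Γ₂ (PresentedGroup.of (Sum.inr (neL Γ₁ Γ₂ q))) = _
      rw [joinToProd, PresentedGroup.toGroup.of]
      show Sum.elim _ _ (toSum Γ₁ Γ₂ (neL Γ₁ Γ₂ q)) = _
      rw [toSum_neL, Sum.elim_inl]
      rfl
  exact DFunLike.congr_fun this a

lemma right_inv_psi2 (b : GraphGroup Γ₂) :
    joinToProd Γ₁ Γ₂ (psi2 Γ₁ Γ₂ b) = (1, b) := by
  have : (joinToProd Γ₁ Γ₂).comp (psi2 Γ₁ Γ₂) =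
      MonoidHom.inr (GraphGroup Γ₁) (GraphGroup Γ₂) := by
    apply PresentedGroup.ext
    intro s
    rw [MonoidHom.comp_apply, psi2, PresentedGroup.toGroup.of]
    cases s with
    | inl i =>
      show joinToProd Γ₁ Γ₂ (PresentedGroup.of (Sum.inl (finSumFinEquiv (Sum.inr i)))) = _
      rw [joinToProd, PresentedGroup.toGroup.of]
      show Sum.elim _ _ (finSumFinEquiv.symm (finSumFinEquiv (Sum.inr i))) = _
      rw [Equiv.symm_apply_apply, Sum.elim_inr]
      rfl
    | inr q =>
      show joinToProd Γ₁ Γ₂ (PresentedGroup.of (Sum.inr (neR Γ₁ Γ₂ q))) = _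
      rw [joinToProd, PresentedGroup.toGroup.of]
      show Sum.elim _ _ (toSum Γ₁ Γ₂ (neR Γ₁ Γ₂ q)) = _
      rw [toSum_neR, Sum.elim_inr]
      rfl
  exact DFunLike.congr_fun this b

end Join

/-- The group associated to the simplicial join of two graphs is isomorphic to the direct
product of the groups associated to the two graphs.  (The join is realised as a graph on
`Fin (n₁ + n₂)` via the canonical equivalence `Fin n₁ ⊕ Fin n₂ ≃ Fin (n₁ + n₂)`.) -/
theorem graphGroup_of_join_iso_prod
    {n₁ n₂ : ℕ} (Γ₁ : SimpleGraph (Fin n₁)) (Γ₂ : SimpleGraph (Fin n₂)) :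
    Nonempty
      (GraphGroup (SimpleGraph.comap (⇑finSumFinEquiv.symm) (sumJoin Γ₁ Γ₂)) ≃*
        GraphGroup Γ₁ × GraphGroup Γ₂) := by
  refine ⟨{ toFun := joinToProd Γ₁ Γ₂, invFun := prodToJoin Γ₁ Γ₂,
            map_mul' := map_mul _, left_inv := ?_, right_inv := ?_ }⟩
  · intro x
    exact DFunLike.congr_fun (left_inv_hom Γ₁ Γ₂) x
  · rintro ⟨a, b⟩
    have : prodToJoin Γ₁ Γ₂ (a, b) = psi1 Γ₁ Γ₂ a * psi2 Γ₁ Γ₂ b := rfl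
    rw [this, map_mul, right_inv_psi1, right_inv_psi2]
    exact Prod.ext (mul_one a) (one_mul b)
end
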